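/- arXiv:1612.09249 — 10 statements merged into one kernel-verified Lean document; each statement's English description precedes it below -/
import Mathlib

section
/- Let n ≥ 2 and m = n^n + (−1)^{n+1}, let F_q be a finite field whose characteristic p does not divide m, and let ψ ∈ F_q with ψ^{n+1} ≠ 1. Then the generalized Klein–Mukai hypersurface F_ψ = 0 is smooth: the only common zero in an algebraic closure of F_q of the n+1 partial derivatives ∂F_ψ/∂x_0, …, ∂F_ψ/∂x_n is the origin (0,…,0). -/
open MvPolynomial
open scoped BigOperators

noncomputable section

/-- The generalized Klein–Mukai pencil
`F_ψ = x_0^n x_1 + x_1^n x_2 + ⋯ + x_(n-1)^n x_0 + x_n^(n+1) - (n+1) ψ x_0 x_1 ⋯ x_n`. -/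
def FKM (n : ℕ) (R : Type*) [CommRing R] (ψ : R) : MvPolynomial (Fin (n+1)) R :=
  (∑ i : Fin n, (X (Fin.castSucc i) : MvPolynomial (Fin (n+1)) R) ^ n
      * X (Fin.castSucc (finRotate n i)))
    + X (Fin.last n) ^ (n + 1)
    - MvPolynomial.C ((n + 1 : R) * ψ) * ∏ j : Fin (n+1), X j

/-- Partial derivative of a product of distinct variables. -/
lemma pderiv_prod_X {σ : Type*} [DecidableEq σ] {R : Type*} [CommSemiring R]
    (k : σ) (s : Finset σ) :
    pderiv k (∏ j ∈ s, (X j : MvPolynomial σ R)) =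
      if k ∈ s then ∏ j ∈ s.erase k, X j else 0 := by
  induction s using Finset.induction_on with
  | empty => simp [pderiv_one]
  | @insert a s ha ih =>
      rw [Finset.prod_insert ha, pderiv_mul, ih]
      by_cases hk : k = a
      · subst hk
        simp [ha, Finset.erase_insert ha]
      · rw [pderiv_X_of_ne (Ne.symm hk)]
        by_cases hks : k ∈ s
        · simp only [hks, if_true, Finset.mem_insert, hk, false_or, if_true, zero_mul, zero_add]
          rw [Finset.erase_insert_of_ne (Ne.symm hk),
            Finset.prod_insert (fun h => ha (Finset.mem_of_mem_erase h))]
        · simp [hks, hk]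

lemma prod_erase_last {K : Type*} [CommMonoid K] (n : ℕ) (x : Fin (n + 1) → K) :
    ∏ j ∈ Finset.univ.erase (Fin.last n), x j = ∏ b : Fin n, x (Fin.castSucc b) := by
  rw [Fin.univ_castSuccEmb, Finset.erase_cons, Finset.prod_map]
  rfl

lemma prod_erase_castSucc {K : Type*} [CommMonoid K] (n : ℕ) (x : Fin (n + 1) → K)
    (a : Fin n) :
    ∏ j ∈ Finset.univ.erase (Fin.castSucc a), x j =
      (∏ b ∈ Finset.univ.erase a, x (Fin.castSucc b)) * x (Fin.last n) := by
  have hlast : Fin.last n ∉ Finset.map Fin.castSuccEmb (Finset.univ : Finset (Fin n)) := by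
    simp only [Finset.mem_map, Fin.coe_castSuccEmb]
    rintro ⟨b, -, hb⟩
    exact (Fin.castSucc_lt_last b).ne hb
  have hemb : Fin.castSucc a = Fin.castSuccEmb a := rfl
  rw [Fin.univ_castSuccEmb, hemb,
    Finset.erase_cons_of_ne hlast (hemb ▸ (Fin.castSucc_lt_last a).ne'),
    Finset.prod_cons, ← Finset.map_erase, Finset.prod_map, mul_comm]
  rfl

lemma eval_pderiv_FKM_last (n : ℕ) {K : Type*} [CommRing K] (ψ' : K)
    (x : Fin (n + 1) → K) :
    eval x (pderiv (Fin.last n) (FKM n K ψ')) =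
      ((n : K) + 1) * x (Fin.last n) ^ n
        - ((n : K) + 1) * ψ' * ∏ j ∈ Finset.univ.erase (Fin.last n), x j := by
  classical
  rw [FKM, map_sub, map_add, map_sum]
  have hzero : ∀ i : Fin n,
      pderiv (Fin.last n) ((X (Fin.castSucc i) : MvPolynomial (Fin (n+1)) K) ^ n
        * X (Fin.castSucc (finRotate n i))) = 0 := by
    intro i
    rw [pderiv_mul, pderiv_pow, pderiv_X_of_ne (Fin.castSucc_lt_last i).ne,
      pderiv_X_of_ne (Fin.castSucc_lt_last (finRotate n i)).ne]
    ring
  rw [Finset.sum_congr rfl fun i _ => hzero i, Finset.sum_const_zero, zero_add,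
    pderiv_pow, pderiv_X_self, pderiv_C_mul, pderiv_prod_X,
    if_pos (Finset.mem_univ _)]
  simp only [map_sub, map_mul, eval_C, eval_pow, eval_X, map_natCast, map_prod, mul_one]
  push_cast
  ring

lemma eval_pderiv_FKM_castSucc (r : ℕ) {K : Type*} [CommRing K] (ψ' : K)
    (x : Fin (r + 2 + 1) → K) (a : Fin (r + 2)) :
    eval x (pderiv (Fin.castSucc a) (FKM (r + 2) K ψ')) =
      x (Fin.castSucc (a - 1)) ^ (r + 2)
        + ((r : K) + 2) * x (Fin.castSucc a) ^ (r + 1) * x (Fin.castSucc (a + 1))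
        - ((r : K) + 3) * ψ' * ∏ j ∈ Finset.univ.erase (Fin.castSucc a), x j := by
  classical
  have hsum : ∀ i : Fin (r + 2),
      eval x (pderiv (Fin.castSucc a)
        ((X (Fin.castSucc i) : MvPolynomial (Fin (r+2+1)) K) ^ (r+2)
          * X (Fin.castSucc (finRotate (r+2) i)))) =
      (if i = a then ((r : K) + 2) * x (Fin.castSucc a) ^ (r + 1) * x (Fin.castSucc (a + 1)) else 0)
        + (if i = a - 1 then x (Fin.castSucc (a - 1)) ^ (r + 2) else 0) := by
    intro i
    rw [finRotate_succ_apply, pderiv_mul, pderiv_pow]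
    rcases eq_or_ne i a with rfl | hia
    · have hne : i + 1 ≠ i := by
        intro h
        have h1 : (1 : Fin (r + 2)) = 0 := by
          rw [← add_sub_cancel_left i 1, h, sub_self]
        rw [Fin.one_eq_zero_iff] at h1
        omega
      rw [pderiv_X_self, pderiv_X_of_ne ((Fin.castSucc_injective _).ne hne)]
      have h2 : i ≠ i - 1 := by
        intro h
        nth_rewrite 1 [h] at hne
        rw [sub_add_cancel] at hne
        exact hne rfl
      rw [if_pos rfl, if_neg h2]
      simp only [map_add, map_mul, eval_pow, eval_X, mul_one, mul_zero, add_zero, map_natCast]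
      push_cast
      ring
    · rw [pderiv_X_of_ne ((Fin.castSucc_injective _).ne hia)]
      rcases eq_or_ne i (a - 1) with rfl | h2
      · rw [sub_add_cancel, pderiv_X_self, if_neg hia, if_pos rfl]
        simp only [map_add, map_mul, eval_pow, eval_X, mul_zero, zero_mul, mul_one, zero_add]
      · have h3 : i + 1 ≠ a := by
          intro h
          apply h2
          rw [← h, add_sub_cancel_right]
        rw [pderiv_X_of_ne ((Fin.castSucc_injective _).ne h3), if_neg hia, if_neg h2]
        simp
  rw [FKM]
  simp only [map_sub, map_add, map_sum]
  rw [Finset.sum_congr rfl fun i _ => hsum i]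
  rw [Finset.sum_add_distrib, Finset.sum_ite_eq' Finset.univ a,
    Finset.sum_ite_eq' Finset.univ (a - 1),
    if_pos (Finset.mem_univ _), if_pos (Finset.mem_univ _)]
  rw [pderiv_pow, pderiv_X_of_ne (Fin.castSucc_lt_last a).ne', pderiv_C_mul, pderiv_prod_X,
    if_pos (Finset.mem_univ _)]
  simp only [map_sub, map_add, map_mul, eval_C, eval_pow, eval_X, map_natCast, map_prod,
    mul_zero, zero_mul, mul_one, map_zero, add_zero, zero_add]
  push_cast
  ring

open Fin.NatCast in
/-- The core algebraic argument. -/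
lemma KM_core {K : Type*} [Field K] (r : ℕ) (ψ' : K)
    (hn1 : ((r : K) + 3) ≠ 0) (hM : (-((r : K) + 2)) ^ (r + 2) - 1 ≠ 0)
    (hψ : ψ' ^ (r + 3) ≠ 1)
    (y : Fin (r + 2) → K) (z : K)
    (hE : ∀ a : Fin (r + 2),
      y (a - 1) ^ (r + 2) + ((r : K) + 2) * y a ^ (r + 1) * y (a + 1)
        = ((r : K) + 3) * ψ' * ((∏ b ∈ Finset.univ.erase a, y b) * z))
    (hEz : z ^ (r + 2) = ψ' * ∏ b, y b) :
    (∀ a, y a = 0) ∧ z = 0 := by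
  set P : K := ∏ b, y b with hPdef
  set u : Fin (r + 2) → K := fun a => y a ^ (r + 2) * y (a + 1) with hu_def
  set c : K := ((r : K) + 3) * ψ' * (P * z) with hc_def
  have hu : ∀ a, u (a - 1) + ((r : K) + 2) * u a = c := by
    intro a
    have h := hE a
    have hPe : y a * ∏ b ∈ Finset.univ.erase a, y b = P :=
      Finset.mul_prod_erase _ _ (Finset.mem_univ a)
    have hs : (a - 1) + 1 = a := sub_add_cancel a 1
    simp only [hu_def, hs, hc_def]
    linear_combination y a * h + ((r : K) + 3) * ψ' * z * hPe
  set w : Fin (r + 2) → K := fun a => ((r : K) + 3) * u a - c with hw_def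
  have hw : ∀ a, w a = (-((r : K) + 2)) * w (a + 1) := by
    intro a
    have h1 := hu (a + 1)
    rw [add_sub_cancel_right] at h1
    simp only [hw_def]
    linear_combination ((r : K) + 3) * h1
  have hpow : ∀ (a : Fin (r + 2)) (j : ℕ), w a = (-((r : K) + 2)) ^ j * w (a + j) := by
    intro a j
    induction j with
    | zero => simp
    | succ j ih =>
        have hc2 : ((j + 1 : ℕ) : Fin (r + 2)) = (j : Fin (r + 2)) + 1 := by push_cast; ring
        rw [hc2, ← add_assoc, ih, hw (a + (j : Fin (r + 2)))]
        ring
  have hw0 : ∀ a, w a = 0 := by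
    intro a
    have h := hpow a (r + 2)
    rw [Fin.natCast_self, add_zero] at h
    have h2 : (1 - (-((r : K) + 2)) ^ (r + 2)) * w a = 0 := by linear_combination h
    rcases mul_eq_zero.mp h2 with h3 | h3
    · exact absurd (by linear_combination -h3) hM
    · exact h3
  have hueq : ∀ a, u a = ψ' * (P * z) := by
    intro a
    have h := hw0 a
    simp only [hw_def, hc_def] at h
    have h2 : ((r : K) + 3) * u a = ((r : K) + 3) * (ψ' * (P * z)) := by linear_combination h
    exact mul_left_cancel₀ hn1 h2
  have hprodu : P ^ (r + 2) * P = (ψ' * (P * z)) ^ (r + 2) := by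
    have h1 : ∏ a, u a = (ψ' * (P * z)) ^ (r + 2) := by
      rw [Finset.prod_congr rfl fun a _ => hueq a]
      simp [Finset.card_univ]
    have h2 : ∏ a, u a = P ^ (r + 2) * P := by
      simp only [hu_def]
      rw [Finset.prod_mul_distrib, Finset.prod_pow]
      congr 1
      exact Fintype.prod_equiv (Equiv.addRight 1) _ _ (fun a => rfl)
    rw [← h1, h2]
  have hP0 : P = 0 := by
    have hA : (1 - ψ' ^ (r + 3)) * P ^ (r + 3) = 0 := by
      linear_combination hprodu + ψ' ^ (r + 2) * P ^ (r + 2) * hEz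
    rcases mul_eq_zero.mp hA with h3 | h3
    · exact absurd (by linear_combination -h3) hψ
    · exact pow_eq_zero_iff (by omega) |>.mp h3
  have hz0 : z = 0 := by
    have : z ^ (r + 2) = 0 := by rw [hEz, hP0, mul_zero]
    exact pow_eq_zero_iff (by omega) |>.mp this
  have hcyc : ∀ a : Fin (r + 2), y a = 0 → y (a - 1) = 0 := by
    intro a ha
    have h := hE a
    rw [ha, hz0] at h
    have h2 : y (a - 1) ^ (r + 2) = 0 := by linear_combination h
    exact pow_eq_zero_iff (by omega) |>.mp h2
  obtain ⟨a0, -, ha0⟩ := Finset.prod_eq_zero_iff.mp hP0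
  have hall : ∀ j : ℕ, y (a0 - (j : Fin (r + 2))) = 0 := by
    intro j
    induction j with
    | zero => simpa using ha0
    | succ j ih =>
        have hc2 : ((j + 1 : ℕ) : Fin (r + 2)) = (j : Fin (r + 2)) + 1 := by push_cast; ring
        rw [hc2, sub_add_eq_sub_sub]
        exact hcyc _ ih
  refine ⟨fun a => ?_, hz0⟩
  have h := hall ((a0 - a).val)
  rwa [Fin.cast_val_eq_self, sub_sub_cancel] at h

/-- if `char F_q ∤ m = n^n + (-1)^(n+1)` and `ψ^(n+1) ≠ 1`, then the
generalized Klein–Mukai hypersurface `F_ψ = 0` is smooth: the only common zero of the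
partial derivatives in an algebraic closure is the origin. -/
theorem klein_mukai_smooth (n m : ℕ) (hn : 2 ≤ n)
    (hm : (m : ℤ) = (n : ℤ) ^ n + (-1) ^ (n + 1))
    (F : Type) [Field F] [Fintype F] (hchar : ¬ (ringChar F ∣ m))
    (ψ : F) (hψ : ψ ^ (n + 1) ≠ 1) :
    ∀ x : Fin (n+1) → AlgebraicClosure F,
      (∀ i, MvPolynomial.eval x
        (MvPolynomial.pderiv i
          (FKM n (AlgebraicClosure F) (algebraMap F (AlgebraicClosure F) ψ))) = 0) →
      x = 0 := by
  obtain ⟨r, rfl⟩ : ∃ r, n = r + 2 := ⟨n - 2, by omega⟩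
  intro x hx
  have hinj : Function.Injective (algebraMap F (AlgebraicClosure F)) :=
    (algebraMap F (AlgebraicClosure F)).injective
  have hmF : (m : F) ≠ 0 := fun h => hchar ((CharP.cast_eq_zero_iff F (ringChar F) m).mp h)
  have hmK : (m : AlgebraicClosure F) ≠ 0 := by
    intro h
    apply hmF
    apply hinj
    rw [map_natCast, map_zero]
    exact h
  have hmK2 : ((m : ℕ) : AlgebraicClosure F)
      = ((r : AlgebraicClosure F) + 2) ^ (r + 2) + (-1) ^ (r + 3) := by
    have h := congrArg (fun t : ℤ => (t : AlgebraicClosure F)) hm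
    push_cast at h
    convert h using 2
  have hsign : ((-1 : AlgebraicClosure F) ^ (r + 2) = 1
        ∧ (-1 : AlgebraicClosure F) ^ (r + 3) = -1)
      ∨ ((-1 : AlgebraicClosure F) ^ (r + 2) = -1
        ∧ (-1 : AlgebraicClosure F) ^ (r + 3) = 1) := by
    rcases Nat.even_or_odd r with ⟨t, rfl⟩ | ⟨t, rfl⟩
    · exact Or.inl ⟨Even.neg_one_pow ⟨t + 1, by ring⟩, Odd.neg_one_pow ⟨t + 1, by ring⟩⟩
    · exact Or.inr ⟨Odd.neg_one_pow ⟨t + 1, by ring⟩, Even.neg_one_pow ⟨t + 2, by ring⟩⟩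
  have hn1 : ((r : AlgebraicClosure F) + 3) ≠ 0 := by
    intro h
    apply hmK
    have hc : ((r : AlgebraicClosure F) + 2) = -1 := by linear_combination h
    rcases hsign with ⟨h1, h2⟩ | ⟨h1, h2⟩ <;> rw [hmK2, hc, h1, h2] <;> ring
  have hM : (-((r : AlgebraicClosure F) + 2)) ^ (r + 2) - 1 ≠ 0 := by
    intro h
    rw [neg_pow] at h
    apply hmK
    rcases hsign with ⟨h1, h2⟩ | ⟨h1, h2⟩ <;> rw [h1] at h <;> rw [hmK2, h2]
    · linear_combination h
    · linear_combination -h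
  have hψK : (algebraMap F (AlgebraicClosure F) ψ) ^ (r + 3) ≠ 1 := by
    intro h
    apply hψ
    apply hinj
    rw [map_pow, map_one]
    exact h
  have hEz : x (Fin.last (r + 2)) ^ (r + 2)
      = algebraMap F (AlgebraicClosure F) ψ * ∏ b, x (Fin.castSucc b) := by
    have h := hx (Fin.last (r + 2))
    rw [eval_pderiv_FKM_last, prod_erase_last] at h
    push_cast at h
    have h2 : ((r : AlgebraicClosure F) + 3) *
        (x (Fin.last (r + 2)) ^ (r + 2)
          - algebraMap F (AlgebraicClosure F) ψ * ∏ b, x (Fin.castSucc b)) = 0 := by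
      linear_combination h
    rcases mul_eq_zero.mp h2 with h3 | h3
    · exact absurd h3 hn1
    · exact sub_eq_zero.mp h3
  have hE : ∀ a : Fin (r + 2),
      x (Fin.castSucc (a - 1)) ^ (r + 2)
          + ((r : AlgebraicClosure F) + 2) * x (Fin.castSucc a) ^ (r + 1)
              * x (Fin.castSucc (a + 1))
        = ((r : AlgebraicClosure F) + 3) * algebraMap F (AlgebraicClosure F) ψ *
            ((∏ b ∈ Finset.univ.erase a, x (Fin.castSucc b)) * x (Fin.last (r + 2))) := by
    intro a
    have h := hx (Fin.castSucc a)
    rw [eval_pderiv_FKM_castSucc, prod_erase_castSucc] at h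
    linear_combination h
  obtain ⟨hy, hz⟩ := KM_core r (algebraMap F (AlgebraicClosure F) ψ) hn1 hM hψK
    (fun b => x (Fin.castSucc b)) (x (Fin.last (r + 2))) hE hEz
  funext i
  simp only [Pi.zero_apply]
  induction i using Fin.lastCases with
  | last => exact hz
  | cast b => exact hy b

end
end

section
/- Let n ≥ 2 and m = n^n + (−1)^{n+1}, let F_q be a finite field whose characteristic p does not divide m, and let ψ ∈ F_q. If there exists a point x = (x_0,…,x_n) in an algebraic closure of F_q with all coordinates x_i nonzero such that F_ψ(x) = 0 and ∂F_ψ/∂x_i(x) = 0 for all i = 0,…,n, then ψ^{n+1} = 1. -/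
open MvPolynomial
open scoped BigOperators

noncomputable section

open Finset
lemma KM_pderiv_prod_X {σ : Type*} [DecidableEq σ] {R : Type*} [CommSemiring R]
    (s : Finset σ) (k : σ) :
    pderiv k (∏ j ∈ s, X j : MvPolynomial σ R) =
      if k ∈ s then ∏ j ∈ s.erase k, X j else 0 := by
  induction s using Finset.induction with
  | empty => simp
  | @insert a s ha ih =>
    rw [Finset.prod_insert ha, pderiv_mul, ih]
    rcases eq_or_ne k a with rfl | hka
    · simp [ha, Finset.erase_insert ha]
    · simp [hka.symm, Finset.mem_insert, hka.symm, Finset.erase_insert_of_ne hka.symm,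
        Finset.prod_insert (fun h => ha (Finset.mem_of_mem_erase h)), hka]

lemma KM_eval_pderiv_last (n : ℕ) (R : Type*) [CommRing R] (ψ : R) (x : Fin (n+1) → R) :
    eval x (pderiv (Fin.last n) (FKM n R ψ)) =
      (n+1) * x (Fin.last n) ^ n
        - ((n+1 : R) * ψ) * ∏ j ∈ univ.erase (Fin.last n), x j := by
  simp [FKM, pderiv_mul, pderiv_pow, KM_pderiv_prod_X, pderiv_C_mul,
    pderiv_X_of_ne (Fin.castSucc_lt_last _).ne]

lemma KM_eval_pderiv_castSucc (n : ℕ) (R : Type*) [CommRing R] (ψ : R)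
    (x : Fin (n+1) → R) (t : Fin n) :
    eval x (pderiv (Fin.castSucc t) (FKM n R ψ)) =
      n * x (Fin.castSucc t) ^ (n-1) * x (Fin.castSucc (finRotate n t))
        + x (Fin.castSucc ((finRotate n)⁻¹ t)) ^ n
        - ((n+1 : R) * ψ) * ∏ j ∈ univ.erase (Fin.castSucc t), x j := by
  have hne : Fin.last n ≠ Fin.castSucc t := (Fin.castSucc_lt_last t).ne'
  rw [FKM, map_sub, map_add, pderiv_C_mul, map_sum]
  simp only [pderiv_mul, pderiv_pow, KM_pderiv_prod_X, pderiv_X_of_ne hne, pderiv_X,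
    Pi.single_apply, Fin.castSucc_inj, map_sub, map_add, map_sum, map_mul, map_pow,
    eval_X, eval_C, map_natCast, apply_ite (eval x), map_one, map_zero, mul_ite, ite_mul,
    mul_zero, zero_mul, add_zero, mul_one, one_mul, Finset.mem_univ, if_true, eval_prod,
    map_prod]
  rw [Finset.sum_add_distrib, Finset.sum_ite_eq' univ t]
  have h2 : ∑ i : Fin n, (if finRotate n i = t then x (Fin.castSucc i) ^ n else 0)
      = x (Fin.castSucc ((finRotate n)⁻¹ t)) ^ n := by
    rw [Finset.sum_eq_single ((finRotate n)⁻¹ t)]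
    · rw [Equiv.Perm.inv_def, Equiv.apply_symm_apply, if_pos rfl]
    · intro b _ hb
      rw [if_neg]
      intro h
      exact hb (by rw [← h, Equiv.Perm.inv_def, Equiv.symm_apply_apply])
    · simp
  rw [h2]
  simp

/-- if `char F_q ∤ m = n^n + (-1)^(n+1)` and the generalized Klein–Mukai
fiber `F_ψ = 0` has a singular point with all coordinates nonzero in an algebraic
closure, then `ψ^(n+1) = 1`. -/
theorem klein_mukai_toric_singular_implies_unit_power (n m : ℕ) (hn : 2 ≤ n)
    (hm : (m : ℤ) = (n : ℤ) ^ n + (-1) ^ (n + 1))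
    (F : Type) [Field F] [Fintype F] (hchar : ¬ (ringChar F ∣ m))
    (ψ : F)
    (x : Fin (n+1) → AlgebraicClosure F) (hx : ∀ i, x i ≠ 0)
    (hzero : MvPolynomial.eval x
      (FKM n (AlgebraicClosure F) (algebraMap F (AlgebraicClosure F) ψ)) = 0)
    (hder : ∀ i, MvPolynomial.eval x
      (MvPolynomial.pderiv i
        (FKM n (AlgebraicClosure F) (algebraMap F (AlgebraicClosure F) ψ))) = 0) :
    ψ ^ (n + 1) = 1 := by
  have hK : True := trivial
  have hPx : (∏ j : Fin (n+1), x j) ≠ 0 := Finset.prod_ne_zero_iff.2 fun j _ => hx j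
  have hinj : Function.Injective (algebraMap F (AlgebraicClosure F)) := (algebraMap F (AlgebraicClosure F)).injective
  have hmF : (m : F) ≠ 0 := fun h => hchar ((CharP.cast_eq_zero_iff F (ringChar F) m).1 h)
  have hmK : (m : AlgebraicClosure F) ≠ 0 := by
    intro h
    apply hmF
    apply hinj
    rw [map_natCast, map_zero, h]
  have hdvd : ((n : ℤ) + 1) ∣ (m : ℤ) := by
    have h0 := sub_dvd_pow_sub_pow (n : ℤ) (-1) n
    rw [hm]
    have h1 : (n : ℤ) ^ n + (-1) ^ (n + 1) = (n : ℤ) ^ n - (-1) ^ n := by ring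
    rw [h1]
    simpa using h0
  have hdvdN : (n + 1) ∣ m := by exact_mod_cast hdvd
  have hn1F : ((n : F) + 1) ≠ 0 := by
    intro h
    apply hchar
    apply dvd_trans _ hdvdN
    rw [← CharP.cast_eq_zero_iff F (ringChar F) (n + 1)]
    push_cast
    exact h
  have hn1K : ((n : AlgebraicClosure F) + 1) ≠ 0 := by
    intro h
    apply hn1F
    apply hinj
    rw [map_add, map_natCast, map_one, map_zero, h]
  set σn := finRotate n with hσdef
  set a : Fin n → AlgebraicClosure F := fun s => x (Fin.castSucc s) ^ n * x (Fin.castSucc (σn s)) with hadef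
  -- relation from the first n partial derivatives
  have eqA : ∀ s : Fin n, (n : AlgebraicClosure F) * a (σn s) + a s = ((n : AlgebraicClosure F) + 1) * (algebraMap F (AlgebraicClosure F) ψ) * ∏ j : Fin (n+1), x j := by
    intro s
    have h := hder (Fin.castSucc (σn s))
    rw [KM_eval_pderiv_castSucc] at h
    rw [hσdef] at h ⊢
    rw [Equiv.Perm.inv_def, Equiv.symm_apply_apply] at h
    have e1 : x (Fin.castSucc (finRotate n s)) * x (Fin.castSucc (finRotate n s)) ^ (n - 1)
        = x (Fin.castSucc (finRotate n s)) ^ n := by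
      rw [← pow_succ']
      congr 1
      omega
    have e2 : x (Fin.castSucc (finRotate n s)) *
        ∏ j ∈ univ.erase (Fin.castSucc (finRotate n s)), x j = ∏ j : Fin (n+1), x j :=
      Finset.mul_prod_erase univ x (mem_univ _)
    simp only [hadef]
    linear_combination x (Fin.castSucc (finRotate n s)) * h
      - (n : AlgebraicClosure F) * x (Fin.castSucc (finRotate n (finRotate n s))) * e1
      + ((n : AlgebraicClosure F) + 1) * (algebraMap F (AlgebraicClosure F) ψ) * e2
  -- relation from the last partial derivative
  have eqB : ((n : AlgebraicClosure F) + 1) * x (Fin.last n) ^ (n + 1)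
      = ((n : AlgebraicClosure F) + 1) * (algebraMap F (AlgebraicClosure F) ψ) * ∏ j : Fin (n+1), x j := by
    have h := hder (Fin.last n)
    rw [KM_eval_pderiv_last] at h
    have e1 : x (Fin.last n) * x (Fin.last n) ^ n = x (Fin.last n) ^ (n + 1) := by
      rw [← pow_succ']
    have e2 : x (Fin.last n) * ∏ j ∈ univ.erase (Fin.last n), x j = ∏ j : Fin (n+1), x j :=
      Finset.mul_prod_erase univ x (mem_univ _)
    linear_combination x (Fin.last n) * h - ((n : AlgebraicClosure F) + 1) * e1 + ((n : AlgebraicClosure F) + 1) * (algebraMap F (AlgebraicClosure F) ψ) * e2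
  -- b and its recursion
  set b : Fin n → AlgebraicClosure F :=
    fun s => ((n : AlgebraicClosure F) + 1) * a s - ((n : AlgebraicClosure F) + 1) * (algebraMap F (AlgebraicClosure F) ψ) * ∏ j : Fin (n+1), x j with hbdef
  have hb : ∀ s, b s = -(n : AlgebraicClosure F) * b (σn s) := by
    intro s
    simp only [hbdef]
    linear_combination ((n : AlgebraicClosure F) + 1) * eqA s
  have hit : ∀ (j : ℕ) (s : Fin n), b s = (-(n : AlgebraicClosure F)) ^ j * b ((σn ^ j) s) := by
    intro j
    induction j with
    | zero => simp
    | succ j ih =>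
      intro s
      rw [ih s, hb ((σn ^ j) s), pow_succ]
      have : (σn ^ (j + 1)) s = σn ((σn ^ j) s) := by
        rw [pow_succ']
        rfl
      rw [this]
      ring
  have hσord : σn ^ n = 1 := by
    have h1 : orderOf σn = n := by
      rw [hσdef, (isCycle_finRotate_of_le hn).orderOf,
        support_finRotate_of_le hn, Finset.card_univ, Fintype.card_fin]
    have h2 := pow_orderOf_eq_one σn
    rwa [h1] at h2
  have hfac : (1 : AlgebraicClosure F) - (-(n : AlgebraicClosure F)) ^ n ≠ 0 := by
    have hZ : (1 : ℤ) - (-(n : ℤ)) ^ n = (-1) ^ (n + 1) * m := by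
      rcases Nat.even_or_odd n with he | ho
      · rw [hm, he.neg_pow, (he.add_one).neg_one_pow]
        ring
      · rw [hm, ho.neg_pow, (ho.add_one).neg_one_pow]
        ring
    have hK : (1 : AlgebraicClosure F) - (-(n : AlgebraicClosure F)) ^ n = (-1) ^ (n + 1) * (m : AlgebraicClosure F) := by
      have := congrArg (fun z : ℤ => (z : AlgebraicClosure F)) hZ
      push_cast at this
      exact this
    rw [hK]
    exact mul_ne_zero (pow_ne_zero _ (neg_ne_zero.2 one_ne_zero)) hmK
  have hbz : ∀ s, b s = 0 := by
    intro s
    have h := hit n s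
    rw [hσord] at h
    simp only [Equiv.Perm.coe_one, id_eq] at h
    have h2 : ((1 : AlgebraicClosure F) - (-(n : AlgebraicClosure F)) ^ n) * b s = 0 := by linear_combination h
    rcases mul_eq_zero.1 h2 with h3 | h3
    · exact absurd h3 hfac
    · exact h3
  have h1 : ∀ s, ((n : AlgebraicClosure F) + 1) * a s = ((n : AlgebraicClosure F) + 1) * (algebraMap F (AlgebraicClosure F) ψ) * ∏ j : Fin (n+1), x j := by
    intro s
    have := hbz s
    rw [hbdef] at this
    linear_combination this
  -- final computation
  have hprodA : ∏ s : Fin n, a s = ∏ s : Fin n, x (Fin.castSucc s) ^ (n + 1) := by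
    simp only [hadef]
    rw [Finset.prod_mul_distrib, hσdef,
      Equiv.prod_comp (finRotate n) (fun s => x (Fin.castSucc s)),
      ← Finset.prod_mul_distrib]
    exact Finset.prod_congr rfl fun s _ => (pow_succ _ _).symm
  have hprodB : (∏ s : Fin n, x (Fin.castSucc s) ^ (n + 1)) * x (Fin.last n) ^ (n + 1)
      = (∏ j : Fin (n+1), x j) ^ (n + 1) := by
    rw [← Finset.prod_pow]
    exact (Fin.prod_univ_castSucc (fun j => x j ^ (n + 1))).symm
  have hC : ∏ s : Fin n, (((n : AlgebraicClosure F) + 1) * a s)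
      = (((n : AlgebraicClosure F) + 1) * (algebraMap F (AlgebraicClosure F) ψ)
          * ∏ j : Fin (n+1), x j) ^ n := by
    rw [Finset.prod_congr rfl fun s _ => h1 s, Finset.prod_const, Finset.card_univ,
      Fintype.card_fin]
  have hD : ∏ s : Fin n, (((n : AlgebraicClosure F) + 1) * a s)
      = ((n : AlgebraicClosure F) + 1) ^ n * ∏ s : Fin n, a s := by
    rw [Finset.prod_mul_distrib, Finset.prod_const, Finset.card_univ, Fintype.card_fin]
  have hE : ((n : AlgebraicClosure F) + 1) ^ (n + 1) * (∏ j : Fin (n+1), x j) ^ (n + 1)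
      = (((n : AlgebraicClosure F) + 1) * (algebraMap F (AlgebraicClosure F) ψ)
          * ∏ j : Fin (n+1), x j) ^ (n + 1) := by
    calc ((n : AlgebraicClosure F) + 1) ^ (n + 1) * (∏ j : Fin (n+1), x j) ^ (n + 1)
        = (((n : AlgebraicClosure F) + 1) ^ n * ∏ s : Fin n, a s)
            * (((n : AlgebraicClosure F) + 1) * x (Fin.last n) ^ (n + 1)) := by
          rw [hprodA, ← mul_assoc]
          rw [mul_comm (((n : AlgebraicClosure F) + 1) ^ n * _) (((n : AlgebraicClosure F) + 1))]
          rw [mul_assoc ((n : AlgebraicClosure F) + 1), mul_assoc, hprodB, ← mul_assoc,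
            ← pow_succ']
      _ = (((n : AlgebraicClosure F) + 1) * (algebraMap F (AlgebraicClosure F) ψ)
            * ∏ j : Fin (n+1), x j) ^ n
          * (((n : AlgebraicClosure F) + 1) * (algebraMap F (AlgebraicClosure F) ψ)
            * ∏ j : Fin (n+1), x j) := by rw [← hD, hC, eqB]
      _ = _ := by rw [← pow_succ]
  have hψK : (algebraMap F (AlgebraicClosure F) ψ) ^ (n + 1) = 1 := by
    have h2 : ((((n : AlgebraicClosure F) + 1)) ^ (n + 1) * (∏ j : Fin (n+1), x j) ^ (n + 1)) * 1
        = ((((n : AlgebraicClosure F) + 1)) ^ (n + 1) * (∏ j : Fin (n+1), x j) ^ (n + 1))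
          * (algebraMap F (AlgebraicClosure F) ψ) ^ (n + 1) := by
      rw [mul_one]
      rw [mul_pow, mul_pow] at hE
      linear_combination hE
    exact (mul_left_cancel₀
      (mul_ne_zero (pow_ne_zero _ hn1K) (pow_ne_zero _ hPx)) h2).symm
  apply hinj
  rw [map_pow, map_one]
  exact hψK

end
end

section
/- Let n ≥ 2 and m = n^n + (−1)^{n+1}, and let K be an algebraically closed field whose characteristic does not divide m. Let L(x_0,…,x_{n−1}) = x_0^n x_1 + x_1^n x_2 + ⋯ + x_{n−2}^n x_{n−1} + x_{n−1}^n x_0 be the loop polynomial of length n. Then L has no critical point with all coordinates nonzero: there is no x ∈ K^n with every x_i ≠ 0 such that ∂L/∂x_i(x) = 0 for all i = 0,…,n−1. -/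
open MvPolynomial
open scoped BigOperators

noncomputable section

/-- The loop polynomial of length `n`:
`L = x_0^n x_1 + x_1^n x_2 + ⋯ + x_(n-2)^n x_(n-1) + x_(n-1)^n x_0`. -/
def loopPoly (n : ℕ) (K : Type*) [CommRing K] : MvPolynomial (Fin n) K :=
  ∑ i : Fin n, (X i : MvPolynomial (Fin n) K) ^ n * X (finRotate n i)

/-- over an algebraically closed field whose characteristic does not divide
`m = n^n + (-1)^(n+1)`, the loop polynomial of length `n` has no critical point with all
coordinates nonzero. -/
theorem loop_no_toric_critical_point (n m : ℕ) (hn : 2 ≤ n)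
    (hm : (m : ℤ) = (n : ℤ) ^ n + (-1) ^ (n + 1))
    (K : Type) [Field K] [IsAlgClosed K] (hchar : ¬ (ringChar K ∣ m)) :
    ¬ ∃ x : Fin n → K, (∀ i, x i ≠ 0) ∧
      (∀ i, MvPolynomial.eval x (MvPolynomial.pderiv i (loopPoly n K)) = 0) := by
  rintro ⟨x, hx, hc⟩
  set σ := finRotate n with hσ
  have key : ∀ i, (n:K) * x i ^ (n-1) * x (σ i) = - x (σ.symm i) ^ n := by
    intro i
    have h := hc i
    simp [loopPoly, pderiv_X, Pi.single_apply, apply_ite (eval x),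
      Equiv.apply_eq_iff_eq_symm_apply, Finset.sum_add_distrib, Finset.sum_ite_eq,
      Finset.sum_ite_eq', ← hσ] at h
    linear_combination h
  have hprod : ∏ i, ((n:K) * x i ^ (n-1) * x (σ i)) = ∏ i, (- x (σ.symm i) ^ n) :=
    Finset.prod_congr rfl fun i _ => key i
  have hL : ∏ i, ((n:K) * x i ^ (n-1) * x (σ i)) = (n:K)^n * ∏ i, x i ^ n := by
    rw [Finset.prod_mul_distrib, Finset.prod_mul_distrib, Finset.prod_const,
      Equiv.prod_comp σ (fun i => x i), Finset.card_univ, Fintype.card_fin,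
      mul_assoc, ← Finset.prod_mul_distrib]
    congr 1
    refine Finset.prod_congr rfl fun i _ => ?_
    rw [← pow_succ, Nat.sub_add_cancel (by omega)]
  have hR : ∏ i, (- x (σ.symm i) ^ n) = (-1:K)^n * ∏ i, x i ^ n := by
    rw [show (fun i => - x (σ.symm i) ^ n) = (fun i => -1 * (fun j => x j ^ n) (σ.symm i)) from ?_]
    · rw [Finset.prod_mul_distrib, Finset.prod_const, Equiv.prod_comp σ.symm (fun j => x j ^ n)]
      simp [Finset.card_univ]
    · funext i; ring
  have hP : (∏ i, x i ^ n) ≠ 0 := by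
    refine Finset.prod_ne_zero_iff.2 fun i _ => pow_ne_zero _ (hx i)
  have heq : (n:K)^n = (-1:K)^n := by
    have := hprod.trans hR
    rw [hL] at this
    exact mul_right_cancel₀ hP this
  have hmK : (m : K) = 0 := by
    have : ((m : ℤ) : K) = 0 := by
      rw [hm]; push_cast
      rw [pow_succ]
      rw [heq]; ring
    exact_mod_cast this
  exact hchar ((CharP.cast_eq_zero_iff K (ringChar K) m).mp hmK)

end
end

section
/- Let n ≥ 2, let F_q be a finite field, let Θ : F_q → ℂ^× be a nontrivial additive character, and let ψ ∈ F_q. Then the exponential sums for wF_ψ over G_m × A^{n+1} and over G_m^{n+1} × A^1 agree: Σ_{w ∈ F_q^×} Σ_{(x_0,…,x_n) ∈ F_q^{n+1}} Θ(w·F_ψ(x_0,…,x_n)) = Σ_{w ∈ F_q^×} Σ_{(x_0,…,x_{n−1}) ∈ (F_q^×)^n} Σ_{x_n ∈ F_q} Θ(w·F_ψ(x_0,…,x_n)). -/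
open MvPolynomial
open scoped BigOperators

noncomputable section

namespace KMaux

open Finset

def gseq (n : ℕ) : ℕ → ℤ
  | 0 => 0
  | k+1 => 1 - (n : ℤ) * gseq n k

def sclU {F : Type} [Field F] (m : ℕ) (U : Fˣ) (i j : Fin (m+1)) : Fˣ :=
  if j = i then 1 else U ^ gseq (m+1) ((j - i).val - 1)

lemma sclU_spec {F : Type} [Field F] (m : ℕ) (U : Fˣ) (i j : Fin (m+1))
    (hj : j ≠ i) (hj' : j + 1 ≠ i) :
    (sclU m U i j) ^ (m+1) * sclU m U i (j+1) = U := by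
  rw [sclU, sclU, if_neg hj, if_neg hj']
  have hd : j - i ≠ 0 := sub_ne_zero.mpr hj
  have hd1 : j + 1 - i = (j - i) + 1 := by rw [sub_add_eq_add_sub]
  have hd1' : (j - i) + 1 ≠ 0 := by
    rw [← hd1]; exact sub_ne_zero.mpr hj'
  have hlast : j - i ≠ Fin.last m := by
    intro h; exact hd1' (by rw [h, Fin.last_add_one])
  have hval : ((j - i) + 1).val = (j - i).val + 1 := by
    rw [Fin.val_add_one, if_neg hlast]
  obtain ⟨k, hk⟩ : ∃ k, (j - i).val = k + 1 := by
    refine ⟨(j - i).val - 1, ?_⟩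
    have : (j - i).val ≠ 0 := fun h => hd (Fin.ext h)
    omega
  rw [hd1, hval, hk]
  simp only [Nat.add_sub_cancel]
  rw [show gseq (m+1) (k + 1) = 1 - (m+1 : ℤ) * gseq (m+1) k from rfl]
  rw [← zpow_natCast (U ^ gseq (m+1) k) (m+1), ← zpow_mul, ← zpow_add]
  conv_rhs => rw [← zpow_one U]
  congr 1
  push_cast
  ring

lemma sclU_inv {F : Type} [Field F] (m : ℕ) (U : Fˣ) (i j : Fin (m+1)) :
    sclU m U⁻¹ i j = (sclU m U i j)⁻¹ := by
  rw [sclU, sclU]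
  split
  · simp
  · rw [inv_zpow]

def Csum (m : ℕ) {F : Type} [CommRing F] (v : Fin (m+1) → F) : F :=
  ∑ j : Fin (m+1), v j ^ (m+1) * v (j + 1)

lemma Csum_scale {F : Type} [Field F] (m : ℕ) (U : Fˣ) (i : Fin (m+1))
    (v : Fin (m+1) → F) (hv : v i = 0) :
    Csum m (fun j => (sclU m U i j : F) * v j) = (U : F) * Csum m v := by
  rw [Csum, Csum, Finset.mul_sum]
  refine Finset.sum_congr rfl fun j _ => ?_
  by_cases hji : j = i
  · simp [hji, hv, zero_pow]
  · by_cases hji' : j + 1 = i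
    · simp [hji', hv]
    · have hs := sclU_spec m U i j hji hji'
      have hs' : ((sclU m U i j : F)) ^ (m+1) * (sclU m U i (j+1) : F) = (U : F) := by
        rw [← Units.val_pow_eq_pow_val, ← Units.val_mul, hs]
      calc ((sclU m U i j : F) * v j) ^ (m+1) * ((sclU m U i (j+1) : F) * v (j+1))
          = ((sclU m U i j : F) ^ (m+1) * (sclU m U i (j+1) : F)) * (v j ^ (m+1) * v (j+1)) := by
            rw [mul_pow]; ring
        _ = (U : F) * (v j ^ (m+1) * v (j+1)) := by rw [hs']

def idxSet {m : ℕ} (s : Finset (Fin (m+1))) : Fin (m+1) :=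
  if h : s.Nonempty then s.min' h else 0

def idx {m : ℕ} {F : Type} [Field F] [DecidableEq F] (v : Fin (m+1) → F) : Fin (m+1) :=
  idxSet (Finset.univ.filter fun j => v j = 0)

lemma idx_mul_unit {m : ℕ} {F : Type} [Field F] [DecidableEq F]
    (u : Fin (m+1) → Fˣ) (v : Fin (m+1) → F) :
    idx (fun j => (u j : F) * v j) = idx v := by
  unfold idx
  congr 1
  refine Finset.filter_congr fun j _ => ?_
  simp [mul_eq_zero, Units.ne_zero]

lemma idx_zero {m : ℕ} {F : Type} [Field F] [DecidableEq F]
    (v : Fin (m+1) → F) (h : ∃ i, v i = 0) : v (idx v) = 0 := by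
  obtain ⟨i, hi⟩ := h
  have hne : (Finset.univ.filter fun j => v j = 0).Nonempty :=
    ⟨i, Finset.mem_filter.mpr ⟨Finset.mem_univ i, hi⟩⟩
  have : idx v ∈ Finset.univ.filter fun j => v j = 0 := by
    rw [idx, idxSet, dif_pos hne]; exact Finset.min'_mem _ hne
  exact (Finset.mem_filter.mp this).2

lemma evalFKM {F : Type} [Field F] (m : ℕ) (ψ : F) (v : Fin (m+1) → F) (t : F) :
    eval (Fin.snoc v t) (FKM (m+1) F ψ) =
      Csum m v + t ^ (m+1+1) - (((m+1 : ℕ) + 1 : F) * ψ) * ((∏ i, v i) * t) := by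
  simp [FKM, Csum, Fin.prod_univ_castSucc, Fin.snoc_castSucc, Fin.snoc_last,
    finRotate_succ_apply, mul_assoc]

end KMaux

open KMaux Finset

/-- the exponential sums of `w·F_ψ` over `𝔾_m × 𝔸^(n+1)` and over
`𝔾_m^(n+1) × 𝔸^1` agree (the first `n` affine variables may be replaced by toric
ones). -/
theorem klein_mukai_exponential_sum_toric (n : ℕ) (hn : 2 ≤ n)
    (F : Type) [Field F] [Fintype F] [DecidableEq F]
    (Θ : AddChar F ℂ) (hΘ : ∃ a : F, Θ a ≠ 1) (ψ : F) :
    ∑ w : Fˣ, ∑ x : Fin (n+1) → F, Θ ((w : F) * MvPolynomial.eval x (FKM n F ψ))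
      = ∑ w : Fˣ, ∑ y : Fin n → Fˣ, ∑ t : F,
          Θ ((w : F) *
            MvPolynomial.eval (Fin.snoc (fun i => (y i : F)) t) (FKM n F ψ)) := by
  obtain ⟨m, rfl⟩ : ∃ m, n = m + 1 := ⟨n - 1, by omega⟩
  have hΘ1 : Θ ≠ 1 := by
    rintro rfl; obtain ⟨a, ha⟩ := hΘ; exact ha rfl
  set P : (Fin (m+1) → F) → Prop := fun v => ∀ i, v i ≠ 0 with hPdef
  -- reindex the full sum via snoc
  have hsnoc : ∀ w : Fˣ,
      (∑ x : Fin (m+1+1) → F, Θ ((w : F) * MvPolynomial.eval x (FKM (m+1) F ψ)))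
      = ∑ v : Fin (m+1) → F, ∑ t : F,
          Θ ((w : F) * MvPolynomial.eval (Fin.snoc v t) (FKM (m+1) F ψ)) := by
    intro w
    have hbij : Function.Bijective
        (fun p : (Fin (m+1) → F) × F => (Fin.snoc p.1 p.2 : Fin (m+1+1) → F)) := by
      rw [Function.bijective_iff_has_inverse]
      refine ⟨fun x => (Fin.init x, x (Fin.last _)), fun p => ?_, fun x => ?_⟩
      · simp [Fin.init_snoc, Fin.snoc_last]
      · simp [Fin.snoc_init_self]
    calc (∑ x : Fin (m+1+1) → F, Θ ((w : F) * MvPolynomial.eval x (FKM (m+1) F ψ)))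
        = ∑ p : (Fin (m+1) → F) × F,
            Θ ((w : F) * MvPolynomial.eval (Fin.snoc p.1 p.2) (FKM (m+1) F ψ)) :=
          (Fintype.sum_bijective _ hbij _ _ fun p => rfl).symm
      _ = ∑ v : Fin (m+1) → F, ∑ t : F,
            Θ ((w : F) * MvPolynomial.eval (Fin.snoc v t) (FKM (m+1) F ψ)) :=
          Fintype.sum_prod_type _
  -- the part with all coordinates nonzero equals the toric sum
  have hPpart : ∀ w : Fˣ,
      (∑ v ∈ univ.filter P, ∑ t : F,
          Θ ((w : F) * MvPolynomial.eval (Fin.snoc v t) (FKM (m+1) F ψ)))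
      = ∑ y : Fin (m+1) → Fˣ, ∑ t : F,
          Θ ((w : F) * MvPolynomial.eval (Fin.snoc (fun i => (y i : F)) t) (FKM (m+1) F ψ)) := by
    intro w
    refine Finset.sum_nbij'
      (i := fun v => fun k => if h : v k = 0 then (1 : Fˣ) else Units.mk0 (v k) h)
      (j := fun y => fun k => (y k : F)) (fun a _ => mem_univ _) ?_ ?_ ?_ ?_
    · intro y _
      refine mem_filter.mpr ⟨mem_univ _, fun i => Units.ne_zero _⟩
    · intro v hv
      funext k
      have hk : v k ≠ 0 := (mem_filter.mp hv).2 k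
      simp [hk]
    · intro y _
      funext k
      simp [Units.ne_zero]
    · intro v hv
      have : (fun k => ((if h : v k = 0 then (1 : Fˣ) else Units.mk0 (v k) h : Fˣ) : F)) = v := by
        funext k
        have hk : v k ≠ 0 := (mem_filter.mp hv).2 k
        simp [hk]
      rw [this]
  -- on the complement the product term dies
  have hAf0 : ∀ v ∈ univ.filter fun v => ¬ P v, ∃ i, v i = 0 := by
    intro v hv
    have h := (mem_filter.mp hv).2
    simp only [hPdef] at h
    push_neg at h
    exact h
  have hprod : ∀ v ∈ univ.filter fun v => ¬ P v, ∀ t : F,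
      MvPolynomial.eval (Fin.snoc v t) (FKM (m+1) F ψ) = Csum m v + t ^ (m+1+1) := by
    intro v hv t
    obtain ⟨i, hi⟩ := hAf0 v hv
    rw [evalFKM, Finset.prod_eq_zero (mem_univ i) hi]
    ring
  -- K-constancy via the toric scaling bijection
  have hK : ∀ (w0 : F) (U : Fˣ),
      (∑ v ∈ univ.filter fun v => ¬ P v, Θ (w0 * ((U : F) * Csum m v)))
      = ∑ v ∈ univ.filter fun v => ¬ P v, Θ (w0 * Csum m v) := by
    intro w0 U
    refine Finset.sum_nbij'
      (i := fun v => fun j => (sclU m U (idx v) j : F) * v j)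
      (j := fun v => fun j => (sclU m U⁻¹ (idx v) j : F) * v j) ?_ ?_ ?_ ?_ ?_
    · intro v hv
      refine mem_filter.mpr ⟨mem_univ _, ?_⟩
      obtain ⟨i, hi⟩ := hAf0 v hv
      intro h
      exact h i (show (sclU m U (idx v) i : F) * v i = 0 by rw [hi, mul_zero])
    · intro v hv
      refine mem_filter.mpr ⟨mem_univ _, ?_⟩
      obtain ⟨i, hi⟩ := hAf0 v hv
      intro h
      exact h i (show (sclU m U⁻¹ (idx v) i : F) * v i = 0 by rw [hi, mul_zero])
    · intro v hv
      funext j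
      show (sclU m U⁻¹ (idx fun j => (sclU m U (idx v) j : F) * v j) j : F)
          * ((sclU m U (idx v) j : F) * v j) = v j
      rw [idx_mul_unit (sclU m U (idx v)) v]
      rw [← mul_assoc, sclU_inv, ← Units.val_mul, inv_mul_cancel, Units.val_one, one_mul]
    · intro v hv
      funext j
      show (sclU m U (idx fun j => (sclU m U⁻¹ (idx v) j : F) * v j) j : F)
          * ((sclU m U⁻¹ (idx v) j : F) * v j) = v j
      rw [idx_mul_unit (sclU m U⁻¹ (idx v)) v]
      rw [← mul_assoc, sclU_inv, ← Units.val_mul, mul_inv_cancel, Units.val_one, one_mul]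
    · intro v hv
      rw [Csum_scale m U (idx v) v (idx_zero v (hAf0 v hv))]
  -- the pure character sum over w and t vanishes
  have hc : ∀ c : F, c ≠ 0 → (∑ w : Fˣ, Θ (c * (w : F))) = -1 := by
    intro c hc0
    have h1 : ∑ x : F, Θ (c * x) = 0 := by
      have h := AddChar.sum_eq_zero_of_ne_one (AddChar.IsPrimitive.of_ne_one hΘ1 hc0)
      simpa [AddChar.mulShift_apply] using h
    have h2 : Θ (c * 0) + ∑ x ∈ univ.erase (0 : F), Θ (c * x) = ∑ x : F, Θ (c * x) :=
      Finset.add_sum_erase (univ : Finset F) (fun x => Θ (c * x)) (mem_univ (0 : F))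
    have h3 : (∑ x ∈ univ.erase (0 : F), Θ (c * x)) = ∑ w : Fˣ, Θ (c * (w : F)) := by
      refine Finset.sum_nbij'
        (i := fun x => if h : x = 0 then 1 else Units.mk0 x h)
        (j := fun w : Fˣ => (w : F)) (fun a _ => mem_univ _) ?_ ?_ ?_ ?_
      · intro w _
        exact mem_erase.mpr ⟨Units.ne_zero w, mem_univ _⟩
      · intro x hx
        have hx0 : x ≠ 0 := (mem_erase.mp hx).1
        simp [hx0]
      · intro w _
        simp [Units.ne_zero]
      · intro x hx
        have hx0 : x ≠ 0 := (mem_erase.mp hx).1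
        simp [hx0]
    rw [h3] at h2
    rw [mul_zero, AddChar.map_zero_eq_one] at h2
    rw [h1] at h2
    linear_combination h2
  have hB : (∑ w : Fˣ, ∑ t : F, Θ ((w : F) * t ^ (m+1+1))) = 0 := by
    rw [Finset.sum_comm]
    have hval : ∀ t : F, (∑ w : Fˣ, Θ ((w : F) * t ^ (m+1+1)))
        = if t = 0 then ((Fintype.card Fˣ : ℂ)) else -1 := by
      intro t
      by_cases ht : t = 0
      · simp [ht, zero_pow]
      · rw [if_neg ht, ← hc (t ^ (m+1+1)) (pow_ne_zero _ ht)]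
        exact Finset.sum_congr rfl fun w _ => by rw [mul_comm]
    rw [Finset.sum_congr rfl fun t _ => hval t]
    have hsplit2 : ∀ t : F, (if t = 0 then ((Fintype.card Fˣ : ℂ)) else -1)
        = -1 + (if t = 0 then ((Fintype.card Fˣ : ℂ)) + 1 else 0) := by
      intro t; split <;> ring
    rw [Finset.sum_congr rfl fun t _ => hsplit2 t, Finset.sum_add_distrib,
      Finset.sum_ite_eq' univ (0 : F) (fun _ => ((Fintype.card Fˣ : ℂ)) + 1)]
    simp only [mem_univ, if_true, Finset.sum_const, Finset.card_univ, nsmul_eq_mul]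
    rw [Fintype.card_units]
    have h1 : 1 ≤ Fintype.card F := Fintype.card_pos
    push_cast [Nat.cast_sub h1]
    ring
  -- assemble
  have key : ∀ w : Fˣ,
      (∑ x : Fin (m+1+1) → F, Θ ((w : F) * MvPolynomial.eval x (FKM (m+1) F ψ)))
      = (∑ y : Fin (m+1) → Fˣ, ∑ t : F,
          Θ ((w : F) * MvPolynomial.eval (Fin.snoc (fun i => (y i : F)) t) (FKM (m+1) F ψ)))
        + (∑ v ∈ univ.filter fun v => ¬ P v, Θ ((w : F) * Csum m v))
            * (∑ t : F, Θ ((w : F) * t ^ (m+1+1))) := by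
    intro w
    rw [hsnoc w, ← Finset.sum_filter_add_sum_filter_not univ P, hPpart w]
    congr 1
    rw [Finset.sum_mul]
    refine Finset.sum_congr rfl fun v hv => ?_
    rw [Finset.mul_sum]
    refine Finset.sum_congr rfl fun t _ => ?_
    rw [hprod v hv t, mul_add, AddChar.map_add_eq_mul]
  rw [Finset.sum_congr rfl fun w _ => key w, Finset.sum_add_distrib]
  have hKw : ∀ w : Fˣ, (∑ v ∈ univ.filter fun v => ¬ P v, Θ ((w : F) * Csum m v))
      = ∑ v ∈ univ.filter fun v => ¬ P v, Θ (Csum m v) := by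
    intro w
    have := hK 1 w
    simpa using this
  have : (∑ w : Fˣ, (∑ v ∈ univ.filter fun v => ¬ P v, Θ ((w : F) * Csum m v))
      * (∑ t : F, Θ ((w : F) * t ^ (m+1+1)))) = 0 := by
    calc (∑ w : Fˣ, (∑ v ∈ univ.filter fun v => ¬ P v, Θ ((w : F) * Csum m v))
          * (∑ t : F, Θ ((w : F) * t ^ (m+1+1))))
        = ∑ w : Fˣ, (∑ v ∈ univ.filter fun v => ¬ P v, Θ (Csum m v))
          * (∑ t : F, Θ ((w : F) * t ^ (m+1+1))) :=
          Finset.sum_congr rfl fun w _ => by rw [hKw w]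
      _ = (∑ v ∈ univ.filter fun v => ¬ P v, Θ (Csum m v))
          * ∑ w : Fˣ, (∑ t : F, Θ ((w : F) * t ^ (m+1+1))) := by
          rw [Finset.mul_sum]
      _ = 0 := by rw [hB, mul_zero]
  rw [this, add_zero]

end
end

section
/- Let n ≥ 2, let F_q be a finite field, let Θ : F_q → ℂ^× be a nontrivial additive character, and let ψ ∈ F_q. Then for every nonempty subset J ⊆ {0,1,…,n−1}, the exponential sum over points whose coordinates indexed by J vanish is zero: Σ_{w ∈ F_q^×} Σ_{(x_0,…,x_n) ∈ F_q^{n+1}, x_i = 0 for all i ∈ J} Θ(w·F_ψ(x_0,…,x_n)) = 0. -/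
open MvPolynomial
open scoped BigOperators

noncomputable section

namespace KMAux

/-! ### Character sum lemmas -/

variable {F : Type} [Field F] [Fintype F] [DecidableEq F]

omit [Fintype F] [DecidableEq F] in
lemma sum_theta_eq_zero [Fintype F] (Θ : AddChar F ℂ) (hΘ : Θ ≠ 1) {a : F} (ha : a ≠ 0) :
    ∑ t : F, Θ (a * t) = 0 := by
  have h0 : (Θ.mulShift a) ≠ 0 := by
    intro h
    apply hΘ
    ext s
    have hh := DFunLike.congr_fun h (a⁻¹ * s)
    rw [AddChar.mulShift_apply, mul_inv_cancel_left₀ ha] at hh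
    simpa using hh
  simpa using AddChar.sum_eq_zero_iff_ne_zero.mpr h0

lemma sum_units_theta (Θ : AddChar F ℂ) (hΘ : Θ ≠ 1) {a : F} (ha : a ≠ 0) :
    ∑ w : Fˣ, Θ ((w : F) * a) = -1 := by
  have h1 : ∑ w : Fˣ, Θ ((w : F) * a) = ∑ w : Fˣ, Θ (w : F) := by
    refine Fintype.sum_equiv (Equiv.mulRight (Units.mk0 a ha)) _ _ ?_
    intro w
    simp [Units.val_mul]
  have h2 : ∑ w : Fˣ, Θ (w : F) = ∑ s : {t : F // t ≠ 0}, Θ (s : F) := by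
    refine Fintype.sum_equiv unitsEquivNeZero _ _ ?_
    intro w; rfl
  have h3 : ∑ t ∈ Finset.univ \ {0}, Θ t = ∑ s : {t : F // t ≠ 0}, Θ (s : F) :=
    Finset.sum_subtype (p := fun t : F => t ≠ 0) (Finset.univ \ {0}) (by simp) (fun t => Θ t)
  have h4 : (∑ t : F, Θ t) = ∑ t ∈ Finset.univ \ {0}, Θ t + Θ 0 :=
    Finset.sum_eq_sum_sdiff_singleton_add (Finset.mem_univ 0) Θ
  have h5 : (∑ t : F, Θ t) = 0 := by
    have : (Θ : AddChar F ℂ) ≠ 0 := hΘ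
    exact AddChar.sum_eq_zero_iff_ne_zero.mpr this
  rw [h1, h2, ← h3]
  rw [h5, AddChar.map_zero_eq_one] at h4
  linear_combination -h4

/-! ### Evaluation lemmas for `FKM` -/

omit [Fintype F] [DecidableEq F] in
lemma eval_FKM (k : ℕ) (ψ : F) (x : Fin (k+3) → F) :
    MvPolynomial.eval x (FKM (k+2) F ψ) =
      (∑ i : Fin (k+2), x (Fin.castSucc i) ^ (k+2) * x (Fin.castSucc (i+1)))
      + x (Fin.last (k+2)) ^ (k+3) - (((k:F)+2+1) * ψ) * ∏ j : Fin (k+3), x j := by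
  simp [FKM, finRotate_succ_apply]

lemma one_ne_zero_fin (k : ℕ) : (1 : Fin (k+2)) ≠ 0 := by
  simp [Fin.ext_iff]

lemma sub_one_ne_self (k : ℕ) (v : Fin (k+2)) : v - 1 ≠ v := by
  intro h
  have := sub_eq_self.mp h
  exact one_ne_zero_fin k this

lemma add_one_ne_self (k : ℕ) (v : Fin (k+2)) : v + 1 ≠ v := by
  intro h
  have : v + 1 = v + 0 := by rw [h, add_zero]
  exact one_ne_zero_fin k ((add_right_inj v).mp this)

omit [Fintype F] [DecidableEq F] in
lemma evalCycle (k : ℕ) (ψ : F) (x : Fin (k+3) → F)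
    (h : ∀ i : Fin (k+2), x (Fin.castSucc i) = 0) :
    MvPolynomial.eval x (FKM (k+2) F ψ) = x (Fin.last (k+2)) ^ (k+3) := by
  rw [eval_FKM]
  have hprod : (∏ j : Fin (k+3), x j) = 0 :=
    Finset.prod_eq_zero (Finset.mem_univ (Fin.castSucc 0)) (h 0)
  have hsum : (∑ i : Fin (k+2), x (Fin.castSucc i) ^ (k+2) * x (Fin.castSucc (i+1))) = 0 := by
    refine Finset.sum_eq_zero fun i _ => ?_
    rw [h i, zero_pow (by omega), zero_mul]
  rw [hprod, hsum]
  ring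

open Fin.NatCast Fin.CommRing in
omit [Fintype F] in
lemma evalSplit (k : ℕ) (ψ : F) (x : Fin (k+3) → F) (v : Fin (k+2))
    (h : x (Fin.castSucc (v+1)) = 0) :
    MvPolynomial.eval x (FKM (k+2) F ψ) =
      (x (Fin.castSucc (v-1))) ^ (k+2) * x (Fin.castSucc v)
      + MvPolynomial.eval (Function.update x (Fin.castSucc v) 0) (FKM (k+2) F ψ) := by
  set u := Fin.castSucc v with hu
  set x' := Function.update x u 0 with hx'
  rw [eval_FKM, eval_FKM]
  have hinj := Fin.castSucc_injective (k+2)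
  have hx'u : x' u = 0 := Function.update_self u 0 x
  have hx'last : x' (Fin.last (k+2)) = x (Fin.last (k+2)) :=
    Function.update_of_ne (Fin.ne_last_of_lt (Fin.castSucc_lt_last v)).symm 0 x
  have hprod : (∏ j : Fin (k+3), x j) = 0 :=
    Finset.prod_eq_zero (Finset.mem_univ (Fin.castSucc (v+1))) h
  have hprod' : (∏ j : Fin (k+3), x' j) = 0 :=
    Finset.prod_eq_zero (Finset.mem_univ u) hx'u
  have hterm : ∀ i : Fin (k+2),
      x (Fin.castSucc i) ^ (k+2) * x (Fin.castSucc (i+1))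
      = x' (Fin.castSucc i) ^ (k+2) * x' (Fin.castSucc (i+1))
        + (if i = v - 1 then (x (Fin.castSucc (v-1))) ^ (k+2) * x u else 0) := by
    intro i
    by_cases h1 : i = v - 1
    · subst h1
      rw [if_pos rfl]
      have h2 : v - 1 + 1 = v := by ring
      rw [h2]
      have h3 : x' (Fin.castSucc (v-1)) = x (Fin.castSucc (v-1)) :=
        Function.update_of_ne (fun hh => sub_one_ne_self k v (hinj hh)) 0 x
      rw [h3, hx'u, mul_zero, zero_add]
    · by_cases h2 : i = v
      · subst h2
        rw [if_neg h1, h, mul_zero, hx'u, zero_pow (by omega), zero_mul, add_zero]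
      · rw [if_neg h1, add_zero]
        have h3 : x' (Fin.castSucc i) = x (Fin.castSucc i) :=
          Function.update_of_ne (fun hh => h2 (hinj hh)) 0 x
        have h4 : i + 1 ≠ v := fun hh => h1 (by rw [← hh]; ring)
        have h5 : x' (Fin.castSucc (i+1)) = x (Fin.castSucc (i+1)) :=
          Function.update_of_ne (fun hh => h4 (hinj hh)) 0 x
        rw [h3, h5]
  rw [Finset.sum_congr rfl (fun i _ => hterm i), Finset.sum_add_distrib,
    Finset.sum_ite_eq' Finset.univ (v-1) (fun _ => (x (Fin.castSucc (v-1))) ^ (k+2) * x u),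
    if_pos (Finset.mem_univ _), hx'last, hprod, hprod']
  ring

/-! ### Slice sum manipulation -/

lemma slice_split {m : ℕ} (J : Finset (Fin m)) (u : Fin m) (hu : u ∉ J)
    (f : (Fin m → F) → ℂ) :
    ∑ x ∈ Finset.univ.filter (fun x : Fin m → F => ∀ i ∈ J, x i = 0), f x
      = ∑ x ∈ Finset.univ.filter (fun x : Fin m → F => ∀ i ∈ insert u J, x i = 0),
          ∑ t : F, f (Function.update x u t) := by
  have h := Finset.sum_nbij'
    (s := Finset.univ.filter (fun x : Fin m → F => ∀ i ∈ J, x i = 0))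
    (t := (Finset.univ.filter (fun x : Fin m → F => ∀ i ∈ insert u J, x i = 0)) ×ˢ
      (Finset.univ : Finset F))
    (f := f) (g := fun p => f (Function.update p.1 u p.2))
    (fun x => (Function.update x u 0, x u)) (fun p => Function.update p.1 u p.2)
    ?_ ?_ ?_ ?_ ?_
  · rw [h, Finset.sum_product]
  · intro x hx
    simp only [Finset.mem_filter, Finset.mem_univ, true_and] at hx
    simp only [Finset.mem_product, Finset.mem_filter, Finset.mem_univ, true_and, and_true]
    intro i hi
    rcases Finset.mem_insert.mp hi with h1 | h1
    · subst h1; simp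
    · have hne : i ≠ u := fun hh => hu (by rwa [hh] at h1)
      rw [Function.update_of_ne hne 0 x]
      exact hx i h1
  · intro p hp
    simp only [Finset.mem_product, Finset.mem_filter, Finset.mem_univ, true_and, and_true] at hp
    simp only [Finset.mem_filter, Finset.mem_univ, true_and]
    intro i hi
    have hne : i ≠ u := fun hh => hu (by rwa [hh] at hi)
    rw [Function.update_of_ne hne _ _]
    exact hp i (Finset.mem_insert_of_mem hi)
  · intro x hx
    simp only [Function.update_idem]
    exact Function.update_eq_self u x
  · intro p hp
    simp only [Finset.mem_product, Finset.mem_filter, Finset.mem_univ, true_and, and_true] at hp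
    have h1 : p.1 u = 0 := hp u (Finset.mem_insert_self u J)
    simp only [Function.update_idem, Function.update_self]
    rw [Function.update_eq_self_iff.mpr h1.symm]
  · intro x hx
    dsimp only
    rw [Function.update_idem, Function.update_eq_self]

lemma slice_filter {m : ℕ} (J : Finset (Fin m)) (u : Fin m) (g : (Fin m → F) → ℂ) :
    ∑ x ∈ Finset.univ.filter (fun x : Fin m → F => ∀ i ∈ J, x i = 0),
        (if x u = 0 then g x else 0)
      = ∑ x ∈ Finset.univ.filter (fun x : Fin m → F => ∀ i ∈ insert u J, x i = 0), g x := by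
  rw [← Finset.sum_filter]
  congr 1
  rw [Finset.filter_filter]
  ext x
  simp only [Finset.mem_filter, Finset.mem_univ, true_and, Finset.forall_mem_insert]
  tauto

lemma slice_last_sum (k : ℕ) (J : Finset (Fin (k+3)))
    (hJ : ∀ i ∈ J, (i : ℕ) < k + 2)
    (hall : ∀ i : Fin (k+2), Fin.castSucc i ∈ J) (g : F → ℂ) :
    ∑ x ∈ Finset.univ.filter (fun x : Fin (k+3) → F => ∀ i ∈ J, x i = 0),
        g (x (Fin.last (k+2))) = ∑ t : F, g t := by
  refine Finset.sum_nbij' (fun x => x (Fin.last (k+2)))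
    (fun t => fun j => if j = Fin.last (k+2) then t else 0) ?_ ?_ ?_ ?_ ?_
  · intro x hx; exact Finset.mem_univ _
  · intro t ht
    simp only [Finset.mem_filter, Finset.mem_univ, true_and]
    intro i hi
    have hne : i ≠ Fin.last (k+2) := by
      intro hh
      rw [hh] at hi
      have := hJ _ hi
      simp at this
    exact if_neg hne
  · intro x hx
    simp only [Finset.mem_filter, Finset.mem_univ, true_and] at hx
    funext j
    by_cases hj : j = Fin.last (k+2)
    · subst hj; simp
    · rw [if_neg hj]
      obtain ⟨i, rfl⟩ := Fin.exists_castSucc_eq.mpr hj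
      exact (hx _ (hall i)).symm
  · intro t ht
    simp
  · intro x hx; rfl

/-! ### Boundary existence -/

open Fin.NatCast Fin.CommRing in
lemma exists_boundary {m : ℕ} (P : Fin (m+1) → Prop) [DecidablePred P]
    (h1 : ∃ a, P a) (h2 : ∃ b, ¬ P b) : ∃ v, ¬ P v ∧ P (v + 1) := by
  obtain ⟨a, ha⟩ := h1
  obtain ⟨b, hb⟩ := h2
  have hex : ∃ t : ℕ, ¬ P (a - (t : Fin (m+1))) := by
    refine ⟨((a - b : Fin (m+1)) : ℕ), ?_⟩
    rw [Fin.cast_val_eq_self]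
    simpa [sub_sub_cancel] using hb
  classical
  have hT : ¬ P (a - ((Nat.find hex : ℕ) : Fin (m+1))) := Nat.find_spec hex
  have hT0 : Nat.find hex ≠ 0 := by
    intro h
    rw [h] at hT
    simp only [Nat.cast_zero, sub_zero] at hT
    exact hT ha
  obtain ⟨T', hT1⟩ : ∃ T', Nat.find hex = T' + 1 := ⟨Nat.find hex - 1, by omega⟩
  rw [hT1] at hT
  have hT' : P (a - (T' : Fin (m+1))) := by
    by_contra hc
    exact Nat.find_min hex (show T' < Nat.find hex by omega) hc
  refine ⟨a - ((T' + 1 : ℕ) : Fin (m+1)), hT, ?_⟩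
  have heq : a - ((T' + 1 : ℕ) : Fin (m+1)) + 1 = a - (T' : Fin (m+1)) := by
    push_cast
    ring
  rw [heq]
  exact hT'

/-! ### Base case -/

lemma key_base (k : ℕ) (Θ : AddChar F ℂ) (hΘ : Θ ≠ 1) (ψ : F)
    (J : Finset (Fin (k+3))) (hJ : ∀ i ∈ J, (i : ℕ) < k + 2)
    (hall : ∀ i : Fin (k+2), Fin.castSucc i ∈ J) :
    ∑ w : Fˣ, ∑ x ∈ Finset.univ.filter (fun x : Fin (k+3) → F => ∀ i ∈ J, x i = 0),
        Θ ((w : F) * MvPolynomial.eval x (FKM (k+2) F ψ)) = 0 := by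
  have h1 : ∀ w : Fˣ,
      (∑ x ∈ Finset.univ.filter (fun x : Fin (k+3) → F => ∀ i ∈ J, x i = 0),
        Θ ((w : F) * MvPolynomial.eval x (FKM (k+2) F ψ)))
      = ∑ t : F, Θ ((w : F) * t ^ (k+3)) := by
    intro w
    rw [← slice_last_sum k J hJ hall (fun t => Θ ((w : F) * t ^ (k+3)))]
    refine Finset.sum_congr rfl fun x hx => ?_
    simp only [Finset.mem_filter, Finset.mem_univ, true_and] at hx
    rw [evalCycle k ψ x (fun i => hx _ (hall i))]
  rw [Finset.sum_congr rfl (fun w _ => h1 w), Finset.sum_comm]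
  rw [Finset.sum_eq_sum_sdiff_singleton_add (Finset.mem_univ (0:F))]
  have h2 : ∑ t ∈ Finset.univ \ {0}, (∑ w : Fˣ, Θ ((w : F) * t ^ (k+3)))
      = ∑ t ∈ (Finset.univ \ {0} : Finset F), (-1 : ℂ) := by
    refine Finset.sum_congr rfl fun t ht => ?_
    have ht0 : t ≠ 0 := by
      simp only [Finset.mem_sdiff, Finset.mem_univ, Finset.mem_singleton, true_and] at ht
      exact ht
    exact sum_units_theta Θ hΘ (pow_ne_zero _ ht0)
  have h3 : (∑ w : Fˣ, Θ ((w : F) * (0:F) ^ (k+3))) = (Fintype.card Fˣ : ℂ) := by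
    have : ∀ w : Fˣ, Θ ((w : F) * (0:F) ^ (k+3)) = 1 := by
      intro w
      rw [zero_pow (by omega), mul_zero, AddChar.map_zero_eq_one]
    rw [Finset.sum_congr rfl (fun w _ => this w), Finset.sum_const, Finset.card_univ,
      nsmul_eq_mul, mul_one]
  rw [h2, h3, Finset.sum_const, nsmul_eq_mul]
  have hc1 : (Finset.univ \ {0} : Finset F).card = Fintype.card F - 1 := by
    rw [Finset.card_sdiff_of_subset (by simp), Finset.card_univ, Finset.card_singleton]
  have hc2 : Fintype.card Fˣ = Fintype.card F - 1 := by
    rw [Fintype.card_units]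
  have hq : 1 ≤ Fintype.card F := Fintype.card_pos
  rw [hc1, hc2]
  ring

/-! ### Induction step -/

lemma key_step (k : ℕ) (Θ : AddChar F ℂ) (hΘ : Θ ≠ 1) (ψ : F)
    (J : Finset (Fin (k+3))) (v : Fin (k+2))
    (hv : Fin.castSucc v ∉ J) (hv1 : Fin.castSucc (v+1) ∈ J) :
    ∑ w : Fˣ, ∑ x ∈ Finset.univ.filter (fun x : Fin (k+3) → F => ∀ i ∈ J, x i = 0),
        Θ ((w : F) * MvPolynomial.eval x (FKM (k+2) F ψ))
      = (Fintype.card F : ℂ) * ∑ w : Fˣ,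
          ∑ x ∈ Finset.univ.filter (fun x : Fin (k+3) → F =>
              ∀ i ∈ insert (Fin.castSucc (v-1)) (insert (Fin.castSucc v) J), x i = 0),
            Θ ((w : F) * MvPolynomial.eval x (FKM (k+2) F ψ)) := by
  set u := Fin.castSucc v with hudef
  set u1 := Fin.castSucc (v-1) with hu1def
  have hinj := Fin.castSucc_injective (k+2)
  have hu1u : u1 ≠ u := fun hh => sub_one_ne_self k v (hinj hh)
  have hw : ∀ w : Fˣ,
      (∑ x ∈ Finset.univ.filter (fun x : Fin (k+3) → F => ∀ i ∈ J, x i = 0),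
        Θ ((w : F) * MvPolynomial.eval x (FKM (k+2) F ψ)))
      = (Fintype.card F : ℂ) *
          ∑ x ∈ Finset.univ.filter (fun x : Fin (k+3) → F =>
              ∀ i ∈ insert u1 (insert u J), x i = 0),
            Θ ((w : F) * MvPolynomial.eval x (FKM (k+2) F ψ)) := by
    intro w
    rw [slice_split J u hv (fun x => Θ ((w : F) * MvPolynomial.eval x (FKM (k+2) F ψ)))]
    have hinner : ∀ x ∈ Finset.univ.filter
        (fun x : Fin (k+3) → F => ∀ i ∈ insert u J, x i = 0),
        (∑ t : F, Θ ((w : F) * MvPolynomial.eval (Function.update x u t) (FKM (k+2) F ψ)))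
        = (if x u1 = 0
            then (Fintype.card F : ℂ) * Θ ((w : F) * MvPolynomial.eval x (FKM (k+2) F ψ))
            else 0) := by
      intro x hx
      simp only [Finset.mem_filter, Finset.mem_univ, true_and] at hx
      have hx1 : ∀ t : F,
          MvPolynomial.eval (Function.update x u t) (FKM (k+2) F ψ)
            = (x u1) ^ (k+2) * t + MvPolynomial.eval x (FKM (k+2) F ψ) := by
        intro t
        have h0 : (Function.update x u t) (Fin.castSucc (v+1)) = 0 := by
          have hne : Fin.castSucc (v+1) ≠ u := fun hh => add_one_ne_self k v (hinj hh)
          rw [Function.update_of_ne hne]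
          exact hx _ (Finset.mem_insert_of_mem hv1)
        rw [evalSplit k ψ (Function.update x u t) v h0]
        have e1 : (Function.update x u t) u1 = x u1 := Function.update_of_ne hu1u _ _
        have e2 : (Function.update x u t) u = t := Function.update_self u t x
        have e3 : Function.update (Function.update x u t) u 0 = x := by
          rw [Function.update_idem]
          exact Function.update_eq_self_iff.mpr (hx u (Finset.mem_insert_self u J)).symm
        rw [← hudef, ← hu1def, e1, e2, e3]
      rw [Finset.sum_congr rfl (fun t _ => by rw [hx1 t])]
      by_cases hz : x u1 = 0
      · rw [if_pos hz]
        have hconst : ∀ t : F,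
            Θ ((w : F) * ((x u1) ^ (k+2) * t + MvPolynomial.eval x (FKM (k+2) F ψ)))
            = Θ ((w : F) * MvPolynomial.eval x (FKM (k+2) F ψ)) := by
          intro t
          rw [hz, zero_pow (by omega), zero_mul, zero_add]
        rw [Finset.sum_congr rfl (fun t _ => hconst t), Finset.sum_const, Finset.card_univ,
          nsmul_eq_mul]
      · rw [if_neg hz]
        have hsplit : ∀ t : F,
            Θ ((w : F) * ((x u1) ^ (k+2) * t + MvPolynomial.eval x (FKM (k+2) F ψ)))
            = Θ (((w : F) * (x u1) ^ (k+2)) * t)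
              * Θ ((w : F) * MvPolynomial.eval x (FKM (k+2) F ψ)) := by
          intro t
          rw [← AddChar.map_add_eq_mul]
          congr 1
          ring
        rw [Finset.sum_congr rfl (fun t _ => hsplit t), ← Finset.sum_mul,
          sum_theta_eq_zero Θ hΘ (mul_ne_zero (Units.ne_zero w) (pow_ne_zero _ hz)), zero_mul]
    rw [Finset.sum_congr rfl hinner,
      slice_filter (insert u J) u1
        (fun x => (Fintype.card F : ℂ) * Θ ((w : F) * MvPolynomial.eval x (FKM (k+2) F ψ))),
      ← Finset.mul_sum]
  rw [Finset.sum_congr rfl (fun w _ => hw w), ← Finset.mul_sum]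

/-! ### Main induction -/

lemma key (k : ℕ) (Θ : AddChar F ℂ) (hΘ : Θ ≠ 1) (ψ : F) :
    ∀ (c : ℕ) (J : Finset (Fin (k+3))), J.Nonempty → (∀ i ∈ J, (i : ℕ) < k + 2) →
      k + 2 ≤ J.card + c →
      ∑ w : Fˣ, ∑ x ∈ Finset.univ.filter (fun x : Fin (k+3) → F => ∀ i ∈ J, x i = 0),
        Θ ((w : F) * MvPolynomial.eval x (FKM (k+2) F ψ)) = 0 := by
  intro c
  induction c with
  | zero =>
    intro J hne hJ hcard
    by_cases hall : ∀ i : Fin (k+2), Fin.castSucc i ∈ J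
    · exact key_base k Θ hΘ ψ J hJ hall
    · exfalso
      push_neg at hall
      obtain ⟨i, hi⟩ := hall
      have hsub : J ⊆ ((Finset.univ : Finset (Fin (k+2))).image Fin.castSucc).erase
          (Fin.castSucc i) := by
        intro j hj
        refine Finset.mem_erase.mpr ⟨?_, ?_⟩
        · intro hh
          exact hi (hh ▸ hj)
        · exact Finset.mem_image.mpr ⟨j.castLT (hJ j hj), Finset.mem_univ _,
            Fin.castSucc_castLT j (hJ j hj)⟩
      have himg : ((Finset.univ : Finset (Fin (k+2))).image Fin.castSucc).card = k + 2 := by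
        rw [Finset.card_image_of_injective _ (Fin.castSucc_injective (k+2)),
          Finset.card_univ, Fintype.card_fin]
      have hmem : Fin.castSucc i ∈ (Finset.univ : Finset (Fin (k+2))).image Fin.castSucc :=
        Finset.mem_image.mpr ⟨i, Finset.mem_univ _, rfl⟩
      have hle : J.card ≤ k + 1 := by
        have := Finset.card_le_card hsub
        rw [Finset.card_erase_of_mem hmem, himg] at this
        omega
      omega
  | succ c ih =>
    intro J hne hJ hcard
    by_cases hall : ∀ i : Fin (k+2), Fin.castSucc i ∈ J
    · exact key_base k Θ hΘ ψ J hJ hall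
    · push_neg at hall
      obtain ⟨j0, hj0⟩ := hne
      have hP1 : ∃ a : Fin (k+2), Fin.castSucc a ∈ J :=
        ⟨j0.castLT (hJ j0 hj0), by rwa [Fin.castSucc_castLT]⟩
      obtain ⟨v, hv, hv1⟩ := exists_boundary (m := k+1)
        (fun i : Fin (k+2) => Fin.castSucc i ∈ J) hP1 hall
      set J2 := insert (Fin.castSucc (v-1)) (insert (Fin.castSucc v) J) with hJ2def
      have hne2 : J2.Nonempty := Finset.insert_nonempty _ _
      have hJ2 : ∀ i ∈ J2, (i : ℕ) < k + 2 := by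
        intro i hi
        rcases Finset.mem_insert.mp hi with h1 | h1
        · subst h1; simp
        · rcases Finset.mem_insert.mp h1 with h2 | h2
          · subst h2; simp
          · exact hJ i h2
      have hcard2 : k + 2 ≤ J2.card + c := by
        have e1 : (insert (Fin.castSucc v) J).card = J.card + 1 :=
          Finset.card_insert_of_notMem hv
        have e2 : (insert (Fin.castSucc v) J).card ≤ J2.card :=
          Finset.card_le_card (Finset.subset_insert _ _)
        omega
      rw [key_step k Θ hΘ ψ J v hv hv1, ih J2 hne2 hJ2 hcard2, mul_zero]

end KMAux

/-- for any nonempty set `J` of indices among `{0,…,n-1}`, the exponential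
sum of `w·F_ψ` over the points whose coordinates indexed by `J` vanish is zero. -/
theorem klein_mukai_exponential_sum_vanishing (n : ℕ) (hn : 2 ≤ n)
    (F : Type) [Field F] [Fintype F] [DecidableEq F]
    (Θ : AddChar F ℂ) (hΘ : ∃ a : F, Θ a ≠ 1) (ψ : F)
    (J : Finset (Fin (n+1))) (hJne : J.Nonempty) (hJ : ∀ i ∈ J, (i : ℕ) < n) :
    ∑ w : Fˣ, ∑ x ∈ Finset.univ.filter (fun x : Fin (n+1) → F => ∀ i ∈ J, x i = 0),
        Θ ((w : F) * MvPolynomial.eval x (FKM n F ψ)) = 0 := by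
  obtain ⟨k, rfl⟩ : ∃ k, n = k + 2 := ⟨n - 2, by omega⟩
  have hΘ1 : Θ ≠ 1 := by
    obtain ⟨a, ha⟩ := hΘ
    intro h
    rw [h] at ha
    exact ha (AddChar.one_apply a)
  exact KMAux.key k Θ hΘ1 ψ (k + 2) J hJne hJ (by omega)

end
end

section
/- Let q_0,…,q_n be positive integers (n ≥ 1), let d^T = q_0 + ⋯ + q_n, and set r_i = gcd(q_i, d^T) for each i. Let K = { k ∈ ℤ : k > 1, k divides d^T, and k does not divide r_i for any i = 0,…,n }. Then α ∖ I = { j/k : k ∈ K, 1 ≤ j ≤ k−1, gcd(j,k) = 1 }; that is, the elements of α not lying in I are exactly the reduced fractions in [0,1) whose denominator lies in K. -/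
open scoped BigOperators

/-- with `α = {j/d^T : 0 ≤ j < d^T}`, `β = ⋃_i {j/q_i : 0 ≤ j < q_i}` and
`I = α ∩ β`, the elements of `α ∖ I` are exactly the reduced fractions `j/k` in `[0,1)`
whose denominator `k` lies in
`K = {k > 1 : k ∣ d^T and k ∤ gcd(q_i, d^T) for all i}`. -/
theorem alpha_minus_I_reduced_fractions (n : ℕ) (hn : 1 ≤ n)
    (q : Fin (n+1) → ℕ) (hq : ∀ i, 0 < q i) :
    ∀ a : ℚ,
      ((∃ j : ℕ, j < (∑ i, q i) ∧ a = (j : ℚ) / ((∑ i, q i : ℕ) : ℚ)) ∧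
        ¬ (∃ i : Fin (n+1), ∃ j : ℕ, j < q i ∧ a = (j : ℚ) / (q i : ℚ)))
      ↔ ∃ k j : ℕ,
          (1 < k ∧ k ∣ (∑ i, q i) ∧ ∀ i, ¬ (k ∣ Nat.gcd (q i) (∑ i, q i))) ∧
          1 ≤ j ∧ j ≤ k - 1 ∧ Nat.gcd j k = 1 ∧ a = (j : ℚ) / (k : ℚ) := by
  intro a
  set d : ℕ := ∑ i, q i with hd_def
  have hd : 0 < d := by
    have : 0 < q 0 := hq 0
    exact lt_of_lt_of_le this (Finset.single_le_sum (fun i _ => Nat.zero_le _) (Finset.mem_univ 0))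
  have hdQ : ((d : ℚ)) ≠ 0 := by positivity
  constructor
  · rintro ⟨⟨j, hj, rfl⟩, hni⟩
    set g := Nat.gcd j d with hg_def
    have hg : 0 < g := Nat.gcd_pos_of_pos_right _ hd
    set k := d / g with hk_def
    set j' := j / g with hj'_def
    have hgj : g ∣ j := Nat.gcd_dvd_left _ _
    have hgd : g ∣ d := Nat.gcd_dvd_right _ _
    have hjg : j = g * j' := (Nat.mul_div_cancel' hgj).symm
    have hdg : d = g * k := (Nat.mul_div_cancel' hgd).symm
    have hcop : Nat.gcd j' k = 1 := Nat.coprime_div_gcd_div_gcd hg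
    have hkd : k ∣ d := ⟨g, by rw [hdg]; ring⟩
    have hk0 : 0 < k := Nat.div_pos (Nat.le_of_dvd hd hgd) hg
    have hj'k : j' < k := by
      rcases Nat.lt_or_ge j' k with h | h
      · exact h
      · exfalso; nlinarith [hjg, hdg]
    have haeq : (j : ℚ) / d = (j' : ℚ) / k := by
      rw [div_eq_div_iff hdQ (by exact_mod_cast Nat.cast_pos.mpr hk0 |>.ne')]
      push_cast [hjg, hdg]
      ring
    -- if j = 0 then a = 0 is in β
    have hj0 : j ≠ 0 := by
      intro h
      apply hni
      exact ⟨0, 0, hq 0, by simp [h]⟩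
    have hj'0 : 0 < j' := by
      rcases Nat.eq_zero_or_pos j' with h | h
      · exact absurd (by rw [hjg, h, mul_zero]) hj0
      · exact h
    have hk1 : 1 < k := by
      by_contra h
      have hk1' : k = 1 := by omega
      have hdg' : d = g := by rw [hdg, hk1', mul_one]
      have := Nat.le_of_dvd (Nat.pos_of_ne_zero hj0) hgj
      omega
    have hj'le : j' ≤ k - 1 := by omega
    refine ⟨k, j', ⟨hk1, hkd, ?_⟩, hj'0, hj'le, hcop, haeq⟩
    intro i hdvd
    have hkq : k ∣ q i := hdvd.trans (Nat.gcd_dvd_left _ _)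
    obtain ⟨m, hm⟩ := hkq
    have hm0 : 0 < m := by
      rcases Nat.eq_zero_or_pos m with h | h
      · exfalso; rw [h, mul_zero] at hm; have := hq i; omega
      · exact h
    apply hni
    refine ⟨i, j' * m, ?_, ?_⟩
    · calc j' * m < k * m := by exact (Nat.mul_lt_mul_right hm0).mpr hj'k
        _ = q i := hm.symm
    · rw [haeq, div_eq_div_iff (by exact_mod_cast Nat.cast_pos.mpr hk0 |>.ne')
        (by exact_mod_cast Nat.cast_pos.mpr (hq i) |>.ne')]
      push_cast [hm]
      ring
  · rintro ⟨k, j, ⟨hk1, hkd, hknd⟩, hj1, hjk, hgcd, rfl⟩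
    have hk0 : 0 < k := by omega
    have hkQ : ((k : ℚ)) ≠ 0 := by positivity
    obtain ⟨m, hm⟩ := hkd
    have hm0 : 0 < m := by
      rcases Nat.eq_zero_or_pos m with h | h
      · exfalso; rw [h, mul_zero] at hm; omega
      · exact h
    constructor
    · refine ⟨j * m, ?_, ?_⟩
      · calc j * m < k * m := (Nat.mul_lt_mul_right hm0).mpr (show j < k by omega)
          _ = d := hm.symm
      · rw [div_eq_div_iff hkQ hdQ]
        push_cast [hm]
        ring
    · rintro ⟨i, j'', hj'', heq⟩
      have hqiQ : ((q i : ℚ)) ≠ 0 := by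
        exact_mod_cast Nat.cast_pos.mpr (hq i) |>.ne'
      rw [div_eq_div_iff hkQ hqiQ] at heq
      have hnat : j * q i = j'' * k := by exact_mod_cast heq
      have hkqi : k ∣ q i := by
        have hdvd : k ∣ j * q i := ⟨j'', by rw [hnat]; ring⟩
        exact (Nat.Coprime.symm hgcd).dvd_of_dvd_mul_left hdvd
      exact hknd i (Nat.dvd_gcd hkqi ⟨m, hm⟩)
end

section
/- Let q_0,…,q_n be positive integers (n ≥ 1), let d^T = q_0 + ⋯ + q_n, set r_i = gcd(q_i, d^T), and let K = { k ∈ ℤ : k > 1, k divides d^T, and k does not divide r_i for any i }. Then in ℂ[x], the polynomial g_α(x) = ∏_{a ∈ α ∖ I} (x − e^{2πi a}) equals ∏_{k ∈ K} Φ_k(x), the product of the k-th cyclotomic polynomials over k ∈ K; in particular g_α has integer coefficients. -/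
open Polynomial
open scoped BigOperators Classical

noncomputable section

lemma aux_exists_div_iff (d : ℕ) (hd : 0 < d) (a : ℚ) :
    (∃ j : ℕ, j < d ∧ a = (j : ℚ) / (d : ℚ)) ↔ 0 ≤ a ∧ a < 1 ∧ a.den ∣ d := by
  constructor
  · rintro ⟨j, hj, rfl⟩
    refine ⟨by positivity, ?_, ?_⟩
    · rw [div_lt_one (by exact_mod_cast hd)]
      exact_mod_cast hj
    · have h := Rat.den_dvd (j : ℤ) (d : ℤ)
      rw [Rat.divInt_eq_div] at h
      have h2 : ((j : ℤ) : ℚ) / ((d : ℤ) : ℚ) = (j : ℚ) / (d : ℚ) := by push_cast; ring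
      rw [h2] at h
      exact_mod_cast h
  · rintro ⟨h0, h1, hdvd⟩
    have hnum0 : 0 ≤ a.num := Rat.num_nonneg.mpr h0
    have hnd : a.num < a.den := by
      have h1' := h1
      rw [← Rat.num_div_den a, div_lt_one (by exact_mod_cast a.pos : (0:ℚ) < (a.den:ℚ))] at h1'
      exact_mod_cast h1' 
    have hdenpos : 0 < a.den := a.pos
    obtain ⟨c, hc⟩ := hdvd
    have hcpos : 0 < c := by
      rcases Nat.eq_zero_or_pos c with h | h
      · subst h; simp at hc; omega
      · exact h
    have htn : a.num.toNat < a.den := by omega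
    refine ⟨a.num.toNat * c, ?_, ?_⟩
    · rw [hc]
      exact (Nat.mul_lt_mul_right hcpos).mpr htn
    · have hcast : ((a.num.toNat : ℕ) : ℚ) = (a.num : ℚ) := by
        exact_mod_cast Int.toNat_of_nonneg hnum0
      rw [hc]
      push_cast [hcast]
      rw [mul_div_mul_right _ _ (by exact_mod_cast hcpos.ne' : (c : ℚ) ≠ 0)]
      exact (Rat.num_div_den a).symm

lemma aux_exp_inj {a b : ℚ} (ha0 : 0 ≤ a) (ha1 : a < 1) (hb0 : 0 ≤ b) (hb1 : b < 1)
    (h : Complex.exp (2 * Real.pi * Complex.I * (a : ℂ)) =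
      Complex.exp (2 * Real.pi * Complex.I * (b : ℂ))) : a = b := by
  rw [Complex.exp_eq_exp_iff_exists_int] at h
  obtain ⟨m, hm⟩ := h
  have h2 : (2 * Real.pi * Complex.I) * ((a : ℂ) - (b : ℂ) - (m : ℂ)) = 0 := by
    linear_combination hm
  rcases mul_eq_zero.mp h2 with h3 | h3
  · exact absurd h3 Complex.two_pi_I_ne_zero
  · have h4 : (a : ℂ) = ((b + (m : ℚ)) : ℚ) := by push_cast; linear_combination h3
    have h5 : a = b + (m : ℚ) := by exact_mod_cast h4
    have hm0 : m = 0 := by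
      have : ((m : ℚ)) = a - b := by linarith
      have h6 : (-1 : ℚ) < m := by rw [this]; linarith
      have h7 : (m : ℚ) < 1 := by rw [this]; linarith
      have h8 : (-1 : ℤ) < m := by exact_mod_cast h6
      have h9 : m < (1 : ℤ) := by exact_mod_cast h7
      omega
    rw [h5, hm0]; push_cast; ring

lemma aux_primroot {a : ℚ} (h0 : 0 ≤ a) :
    IsPrimitiveRoot (Complex.exp (2 * Real.pi * Complex.I * (a : ℂ))) a.den := by
  have hnum0 : 0 ≤ a.num := Rat.num_nonneg.mpr h0
  have hcop : a.num.toNat.Coprime a.den := by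
    have h := a.reduced
    have hna : a.num.natAbs = a.num.toNat := by omega
    rwa [hna] at h
  have h1 : ((a.num.toNat : ℕ) : ℂ) = ((a.num : ℤ) : ℂ) := by
    exact_mod_cast congrArg (fun z : ℤ => (z : ℂ)) (Int.toNat_of_nonneg hnum0)
  have harg : ((a : ℚ) : ℂ) = (a.num.toNat : ℂ) / (a.den : ℂ) := by
    rw [Rat.cast_def, h1]
  rw [harg]
  exact Complex.isPrimitiveRoot_exp_of_coprime _ _ a.den_ne_zero hcop


/-- the polynomial `g_α = ∏_(a ∈ α∖I) (x - e^(2πia))` equals the product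
of cyclotomic polynomials `∏_(k ∈ K) Φ_k` where
`K = {k > 1 : k ∣ d^T and k ∤ gcd(q_i, d^T) for all i}`; in particular it has integer
coefficients. -/
theorem g_alpha_product_of_cyclotomics (n : ℕ) (hn : 1 ≤ n)
    (q : Fin (n+1) → ℕ) (hq : ∀ i, 0 < q i) :
    ∀ (dT : ℕ), dT = ∑ i, q i →
    ∀ (αF IF : Finset ℚ),
      αF = (Finset.range dT).image (fun j : ℕ => (j : ℚ) / (dT : ℚ)) →
      IF = αF.filter (fun a => ∃ i : Fin (n+1), ∃ j : ℕ, j < q i ∧ a = (j : ℚ) / (q i : ℚ)) →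
    ∀ (KF : Finset ℕ),
      KF = dT.divisors.filter (fun k => 1 < k ∧ ∀ i, ¬ (k ∣ Nat.gcd (q i) dT)) →
    ∀ (gα : Polynomial ℂ),
      gα = ∏ a ∈ αF \ IF,
        (Polynomial.X - Polynomial.C (Complex.exp (2 * Real.pi * Complex.I * (a : ℂ)))) →
    gα = (∏ k ∈ KF, Polynomial.cyclotomic k ℂ) ∧
      ∃ gZ : Polynomial ℤ, gZ.map (Int.castRingHom ℂ) = gα := by
  intro dT hdT αF IF hα hI KF hK gα hg
  have hdTpos : 0 < dT := by
    rw [hdT]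
    exact Finset.sum_pos (fun i _ => hq i) Finset.univ_nonempty
  set e : ℚ → ℂ := fun a => Complex.exp (2 * Real.pi * Complex.I * (a : ℂ)) with he
  have hαmem : ∀ a : ℚ, a ∈ αF ↔ 0 ≤ a ∧ a < 1 ∧ a.den ∣ dT := by
    intro a
    rw [hα]
    simp only [Finset.mem_image, Finset.mem_range]
    rw [← aux_exists_div_iff dT hdTpos a]
    constructor
    · rintro ⟨j, hj, hje⟩; exact ⟨j, hj, hje.symm⟩
    · rintro ⟨j, hj, hje⟩; exact ⟨j, hj, hje.symm⟩
  have hAmem : ∀ a : ℚ, a ∈ αF \ IF ↔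
      (0 ≤ a ∧ a < 1 ∧ a.den ∣ dT) ∧ ∀ i, ¬ a.den ∣ q i := by
    intro a
    rw [Finset.mem_sdiff, hI, Finset.mem_filter]
    simp only [not_and]
    constructor
    · rintro ⟨ha, hnot⟩
      have ha' := (hαmem a).mp ha
      refine ⟨ha', fun i hdvd => ?_⟩
      exact hnot ha ⟨i, (aux_exists_div_iff (q i) (hq i) a).mpr ⟨ha'.1, ha'.2.1, hdvd⟩⟩
    · rintro ⟨ha, hnot⟩
      refine ⟨(hαmem a).mpr ha, fun _ hex => ?_⟩
      obtain ⟨i, hi⟩ := hex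
      exact hnot i ((aux_exists_div_iff (q i) (hq i) a).mp hi).2.2
  have hKmem : ∀ k, k ∈ KF ↔ k ∣ dT ∧ 1 < k ∧ ∀ i, ¬ k ∣ Nat.gcd (q i) dT := by
    intro k
    rw [hK, Finset.mem_filter, Nat.mem_divisors]
    constructor
    · rintro ⟨⟨h1, _⟩, h2, h3⟩; exact ⟨h1, h2, h3⟩
    · rintro ⟨h1, h2, h3⟩; exact ⟨⟨h1, hdTpos.ne'⟩, h2, h3⟩
  have himg : (αF \ IF).image e = KF.biUnion (fun k => primitiveRoots k ℂ) := by
    ext z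
    simp only [Finset.mem_image, Finset.mem_biUnion]
    constructor
    · rintro ⟨a, ha, rfl⟩
      obtain ⟨⟨h0, h1, hdvd⟩, hni⟩ := (hAmem a).mp ha
      have hprim := aux_primroot h0
      have hden1 : 1 < a.den := by
        rcases Nat.lt_or_ge 1 a.den with h | h
        · exact h
        · exfalso
          have : a.den = 1 := by have := a.pos; omega
          exact hni 0 (by rw [this]; exact one_dvd _)
      refine ⟨a.den, (hKmem a.den).mpr ⟨hdvd, hden1,
        fun i hgd => hni i (hgd.trans (Nat.gcd_dvd_left _ _))⟩, ?_⟩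
      rw [mem_primitiveRoots (by omega : 0 < a.den)]
      exact hprim
    · rintro ⟨k, hk, hz⟩
      obtain ⟨hkdvd, hk1, hkg⟩ := (hKmem k).mp hk
      have hzprim : IsPrimitiveRoot z k := (mem_primitiveRoots (by omega)).mp hz
      obtain ⟨m, hm, hcop, rfl⟩ := (Complex.isPrimitiveRoot_iff z k (by omega)).mp hzprim
      have hkposQ : (0 : ℚ) < (k : ℚ) := by exact_mod_cast Nat.lt_of_lt_of_le Nat.zero_lt_one hk1.le
      have hden : ((m : ℚ) / (k : ℚ)).den = k := by
        have hd := Rat.den_div_eq_of_coprime (a := (m : ℤ)) (b := (k : ℤ))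
          (by exact_mod_cast hkposQ) (by simpa using hcop)
        have hcast : (((m : ℤ) : ℚ) / ((k : ℤ) : ℚ)) = (m : ℚ) / (k : ℚ) := by push_cast; ring
        rw [hcast] at hd
        exact_mod_cast hd
      refine ⟨(m : ℚ) / (k : ℚ), (hAmem _).mpr ⟨⟨by positivity, ?_, ?_⟩, ?_⟩, ?_⟩
      · rw [div_lt_one hkposQ]; exact_mod_cast hm
      · rw [hden]; exact hkdvd
      · intro i hdvd
        rw [hden] at hdvd
        exact hkg i (Nat.dvd_gcd hdvd hkdvd)
      · simp only [he]
        congr 1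
        push_cast
        ring
  have hinj : ∀ a ∈ αF \ IF, ∀ b ∈ αF \ IF, e a = e b → a = b := by
    intro a ha b hb hab
    obtain ⟨⟨ha0, ha1, _⟩, _⟩ := (hAmem a).mp ha
    obtain ⟨⟨hb0, hb1, _⟩, _⟩ := (hAmem b).mp hb
    exact aux_exp_inj ha0 ha1 hb0 hb1 hab
  have hdisj : (↑KF : Set ℕ).PairwiseDisjoint (fun k => primitiveRoots k ℂ) := by
    intro x hx y hy hxy
    simp only [Function.onFun]
    rw [Finset.disjoint_left]
    intro z hzx hzy
    have hx1 := ((hKmem x).mp hx).2.1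
    have hy1 := ((hKmem y).mp hy).2.1
    exact hxy (((mem_primitiveRoots (by omega)).mp hzx).unique
      ((mem_primitiveRoots (by omega)).mp hzy))
  have hcyc : gα = ∏ k ∈ KF, Polynomial.cyclotomic k ℂ := by
    have h1 : gα = ∏ z ∈ (αF \ IF).image e, (X - C z) := by
      rw [hg, Finset.prod_image hinj]
    rw [h1, himg, Finset.prod_biUnion hdisj]
    refine Finset.prod_congr rfl fun k hk => ?_
    have hk1 := ((hKmem k).mp hk).2.1
    exact (Polynomial.cyclotomic_eq_prod_X_sub_primitiveRoots
      (Complex.isPrimitiveRoot_exp k (by omega))).symm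
  refine ⟨hcyc, ∏ k ∈ KF, Polynomial.cyclotomic k ℤ, ?_⟩
  rw [Polynomial.map_prod, hcyc]
  exact Finset.prod_congr rfl fun k _ => Polynomial.map_cyclotomic k (Int.castRingHom ℂ)

end
end

section
/- Let q_0,…,q_n be positive integers (n ≥ 1), let d^T = q_0 + ⋯ + q_n, and let L = { k ∈ ℤ : k ≥ 1 and k divides gcd(q_i, d^T) for some i = 0,…,n }. Let β ∖ I denote the multiset obtained from β by removing one occurrence of each element of I. Then in ℂ[x], the polynomial g_β(x) = ∏_{b ∈ β ∖ I} (x − e^{2πi b}) (product with multiplicity) satisfies g_β(x) · ∏_{k ∈ L} Φ_k(x) = ∏_{i=0}^n (x^{q_i} − 1); in particular g_β has integer coefficients. -/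
open Polynomial
open scoped BigOperators Classical

noncomputable section

lemma exp_rat_div (j k : ℕ) :
    Complex.exp (2 * Real.pi * Complex.I * ((((j:ℚ)/(k:ℚ)) : ℚ) : ℂ)) =
      Complex.exp (2 * Real.pi * Complex.I / (k:ℂ)) ^ j := by
  rw [← Complex.exp_nat_mul]; congr 1; push_cast; ring

lemma X_pow_sub_one_prod (q : ℕ) (hq : 0 < q) :
    ((X : Polynomial ℂ) ^ q - 1) = ∏ j ∈ Finset.range q,
      (X - C (Complex.exp (2 * Real.pi * Complex.I * ((((j:ℚ)/(q:ℚ)) : ℚ) : ℂ)))) := by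
  have hζ := Complex.isPrimitiveRoot_exp q hq.ne'
  have h := X_pow_sub_C_eq_prod hζ hq (one_pow q)
  rw [map_one] at h
  rw [h]
  refine Finset.prod_congr rfl fun j hj => ?_
  rw [exp_rat_div, mul_one]


/-- the polynomial `g_β = ∏_(b ∈ β∖I) (x - e^(2πib))` (product over the
multiset `β` with one occurrence of each element of `I` removed) satisfies
`g_β · ∏_(k ∈ L) Φ_k = ∏_i (x^(q_i) - 1)` where
`L = {k ≥ 1 : k ∣ gcd(q_i, d^T) for some i}`; in particular it has integer
coefficients. -/
theorem g_beta_product_formula (n : ℕ) (hn : 1 ≤ n)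
    (q : Fin (n+1) → ℕ) (hq : ∀ i, 0 < q i) :
    ∀ (dT : ℕ), dT = ∑ i, q i →
    ∀ (αF IF : Finset ℚ),
      αF = (Finset.range dT).image (fun j : ℕ => (j : ℚ) / (dT : ℚ)) →
      IF = αF.filter (fun a => ∃ i : Fin (n+1), ∃ j : ℕ, j < q i ∧ a = (j : ℚ) / (q i : ℚ)) →
    ∀ (βM : Multiset ℚ),
      βM = ∑ i : Fin (n+1), ((Finset.range (q i)).val.map (fun j : ℕ => (j : ℚ) / (q i : ℚ))) →
    ∀ (LF : Finset ℕ),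
      LF = dT.divisors.filter (fun k => ∃ i : Fin (n+1), k ∣ Nat.gcd (q i) dT) →
    ∀ (gβ : Polynomial ℂ),
      gβ = ((βM - IF.val).map (fun b : ℚ =>
        Polynomial.X - Polynomial.C (Complex.exp (2 * Real.pi * Complex.I * (b : ℂ))))).prod →
    gβ * (∏ k ∈ LF, Polynomial.cyclotomic k ℂ)
        = ∏ i : Fin (n+1), ((Polynomial.X : Polynomial ℂ) ^ (q i) - 1) ∧
      ∃ gZ : Polynomial ℤ, gZ.map (Int.castRingHom ℂ) = gβ := by
  intro dT hdT αF IF hα hI βM hβ LF hL gβ hgβ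
  have hdT0 : 0 < dT := hdT ▸ Finset.sum_pos (fun i _ => hq i) ⟨0, Finset.mem_univ 0⟩
  set root : ℚ → ℂ := fun b => Complex.exp (2 * Real.pi * Complex.I * (b:ℂ)) with hroot
  set f : ℚ → Polynomial ℂ := fun b => X - C (root b) with hf
  have hζd := Complex.isPrimitiveRoot_exp dT hdT0.ne'
  -- membership in IF
  have hmemIF : ∀ a : ℚ, a ∈ IF ↔
      ((∃ j : ℕ, j < dT ∧ a = (j:ℚ)/(dT:ℚ)) ∧
        ∃ i : Fin (n+1), ∃ j : ℕ, j < q i ∧ a = (j:ℚ)/(q i : ℚ)) := by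
    intro a
    simp only [hI, hα, Finset.mem_filter, Finset.mem_image, Finset.mem_range]
    constructor
    · rintro ⟨⟨j, hj, rfl⟩, h2⟩; exact ⟨⟨j, hj, rfl⟩, h2⟩
    · rintro ⟨⟨j, hj, rfl⟩, h2⟩; exact ⟨⟨j, hj, rfl⟩, h2⟩
  have hmemLF : ∀ k : ℕ, k ∈ LF ↔ (k ∣ dT ∧ ∃ i : Fin (n+1), k ∣ q i) := by
    intro k
    simp only [hL, Finset.mem_filter, Nat.mem_divisors]
    constructor
    · rintro ⟨⟨hkd, _⟩, i, hk⟩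
      exact ⟨hkd, i, hk.trans (Nat.gcd_dvd_left _ _)⟩
    · rintro ⟨hkd, i, hk⟩
      exact ⟨⟨hkd, hdT0.ne'⟩, i, Nat.dvd_gcd hk hkd⟩
  -- IF.val ≤ βM
  have hIle : IF.val ≤ βM := by
    rw [Multiset.le_iff_subset IF.nodup]
    intro a ha
    obtain ⟨-, i, j, hj, rfl⟩ := (hmemIF a).mp ha
    rw [hβ, Multiset.mem_sum]
    exact ⟨i, Finset.mem_univ i, Multiset.mem_map.mpr ⟨j, by simpa using hj, rfl⟩⟩
  -- beta product
  have hβprod : (βM.map f).prod = ∏ i : Fin (n+1), ((X : Polynomial ℂ) ^ (q i) - 1) := by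
    rw [hβ]
    have hms : Multiset.map f (∑ i : Fin (n+1),
          Multiset.map (fun j:ℕ => (j:ℚ)/(q i:ℚ)) (Finset.range (q i)).val)
        = ∑ i : Fin (n+1),
          Multiset.map f (Multiset.map (fun j:ℕ => (j:ℚ)/(q i:ℚ)) (Finset.range (q i)).val) :=
      map_sum (Multiset.mapAddMonoidHom f) _ (Finset.univ : Finset (Fin (n+1)))
    rw [hms]
    rw [Multiset.prod_sum]
    refine Finset.prod_congr rfl fun i _ => ?_
    rw [Multiset.map_map, X_pow_sub_one_prod (q i) (hq i)]
    rfl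
  -- root injective on IF
  have hrootinj : ∀ a ∈ IF, ∀ b ∈ IF, root a = root b → a = b := by
    intro a ha b hb hab
    obtain ⟨⟨j, hj, rfl⟩, -⟩ := (hmemIF a).mp ha
    obtain ⟨⟨j', hj', rfl⟩, -⟩ := (hmemIF b).mp hb
    have : Complex.exp (2 * Real.pi * Complex.I / (dT:ℂ)) ^ j
        = Complex.exp (2 * Real.pi * Complex.I / (dT:ℂ)) ^ j' := by
      rw [← exp_rat_div, ← exp_rat_div]; exact hab
    rw [hζd.pow_inj hj hj' this]
  -- image of IF under root
  have himg : IF.image root = LF.biUnion (fun k => primitiveRoots k ℂ) := by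
    ext z
    simp only [Finset.mem_image, Finset.mem_biUnion]
    constructor
    · rintro ⟨a, ha, rfl⟩
      obtain ⟨⟨j, hj, rfl⟩, i, j', hj', ha'⟩ := (hmemIF _).mp ha
      set g := Nat.gcd j dT with hg
      have hg0 : 0 < g := Nat.gcd_pos_of_pos_right j hdT0
      have hgdvd : g ∣ dT := Nat.gcd_dvd_right j dT
      set k := dT / g with hk
      have hk0 : 0 < k := Nat.div_pos (Nat.le_of_dvd hdT0 hgdvd) hg0
      have e1 : root ((j:ℚ)/(dT:ℚ))
          = Complex.exp (2 * Real.pi * Complex.I / (dT:ℂ)) ^ j := exp_rat_div j dT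
      have hzval : root ((j:ℚ)/(dT:ℚ))
          = (Complex.exp (2 * Real.pi * Complex.I / (dT:ℂ)) ^ g) ^ (j / g) := by
        rw [e1, ← pow_mul, Nat.mul_div_cancel' (Nat.gcd_dvd_left j dT)]
      have hz : IsPrimitiveRoot (root ((j:ℚ)/(dT:ℚ))) k := by
        rw [hzval]
        exact (hζd.pow_of_dvd hg0.ne' hgdvd).pow_of_coprime _
          (Nat.coprime_div_gcd_div_gcd hg0)
      have hkq : k ∣ q i := by
        refine hz.dvd_of_pow_eq_one _ ?_
        have e2 : root ((j':ℚ)/(q i:ℚ))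
            = Complex.exp (2 * Real.pi * Complex.I / ((q i):ℂ)) ^ j' := exp_rat_div j' (q i)
        rw [ha', e2, ← pow_mul, mul_comm j' (q i), pow_mul,
          (Complex.isPrimitiveRoot_exp (q i) (hq i).ne').pow_eq_one, one_pow]
      exact ⟨k, (hmemLF k).mpr ⟨⟨g, (Nat.div_mul_cancel hgdvd).symm⟩, i, hkq⟩,
        (mem_primitiveRoots hk0).mpr hz⟩
    · rintro ⟨k, hkLF, hzmem⟩
      obtain ⟨hkdT, i, hkq⟩ := (hmemLF k).mp hkLF
      have hk0 : 0 < k := Nat.pos_of_dvd_of_pos hkdT hdT0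
      have hz := (mem_primitiveRoots hk0).mp hzmem
      haveI : NeZero k := ⟨hk0.ne'⟩
      obtain ⟨c, hc, hzc⟩ :=
        (Complex.isPrimitiveRoot_exp k hk0.ne').eq_pow_of_pow_eq_one hz.pow_eq_one
      have e3 : root ((c:ℚ)/(k:ℚ))
          = Complex.exp (2 * Real.pi * Complex.I / (k:ℂ)) ^ c := exp_rat_div c k
      refine ⟨(c:ℚ)/(k:ℚ), ?_, by rw [e3]; exact hzc⟩
      have repr : ∀ m : ℕ, 0 < m → k ∣ m →
          c * (m / k) < m ∧ (c:ℚ)/(k:ℚ) = ((c * (m / k) : ℕ):ℚ)/(m:ℚ) := by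
        intro m hm0 hkm
        have hmk0 : 0 < m / k := Nat.div_pos (Nat.le_of_dvd hm0 hkm) hk0
        constructor
        · calc c * (m / k) < k * (m / k) := by
                exact Nat.mul_lt_mul_of_lt_of_le hc le_rfl hmk0
            _ = m := Nat.mul_div_cancel' hkm
        · have hmk : (k:ℚ) * ((m/k : ℕ):ℚ) = (m:ℚ) := by
            exact_mod_cast Nat.mul_div_cancel' hkm
          have hne : ((m/k:ℕ):ℚ) ≠ 0 := Nat.cast_ne_zero.mpr hmk0.ne'
          rw [← hmk]
          push_cast
          rw [mul_div_mul_right _ _ hne]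
      refine (hmemIF _).mpr ⟨⟨c * (dT / k), (repr dT hdT0 hkdT).1, (repr dT hdT0 hkdT).2⟩,
        i, c * (q i / k), (repr (q i) (hq i) hkq).1, (repr (q i) (hq i) hkq).2⟩
  -- disjointness
  have hdisj : (↑LF : Set ℕ).PairwiseDisjoint (fun k => primitiveRoots k ℂ) := by
    intro k hk k' hk' hne
    simp only [Finset.mem_coe] at hk hk'
    have hk0 : 0 < k := Nat.pos_of_dvd_of_pos ((hmemLF k).mp hk).1 hdT0
    have hk0' : 0 < k' := Nat.pos_of_dvd_of_pos ((hmemLF k').mp hk').1 hdT0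
    refine Finset.disjoint_left.mpr fun z hz hz' => hne ?_
    exact ((mem_primitiveRoots hk0).mp hz).unique ((mem_primitiveRoots hk0').mp hz')
  -- cyclotomic product
  have hcyc : (∏ k ∈ LF, Polynomial.cyclotomic k ℂ) = ∏ a ∈ IF, f a := by
    calc (∏ k ∈ LF, Polynomial.cyclotomic k ℂ)
        = ∏ k ∈ LF, ∏ μ ∈ primitiveRoots k ℂ, (X - C μ) := by
          refine Finset.prod_congr rfl fun k hk => ?_
          have hk0 : 0 < k := Nat.pos_of_dvd_of_pos ((hmemLF k).mp hk).1 hdT0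
          exact cyclotomic_eq_prod_X_sub_primitiveRoots (Complex.isPrimitiveRoot_exp k hk0.ne')
      _ = ∏ z ∈ LF.biUnion (fun k => primitiveRoots k ℂ), (X - C z) :=
          (Finset.prod_biUnion hdisj).symm
      _ = ∏ z ∈ IF.image root, (X - C z) := by rw [himg]
      _ = ∏ a ∈ IF, f a := Finset.prod_image hrootinj
  have hmain : gβ * (∏ k ∈ LF, Polynomial.cyclotomic k ℂ)
      = ∏ i : Fin (n+1), ((X : Polynomial ℂ) ^ (q i) - 1) := by
    rw [hgβ, hcyc, Finset.prod_eq_multiset_prod, ← Multiset.prod_add, ← Multiset.map_add,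
      tsub_add_cancel_of_le hIle]
    exact hβprod
  refine ⟨hmain, ?_⟩
  set PZ := ∏ k ∈ LF, Polynomial.cyclotomic k ℤ with hPZ
  set QZ := ∏ i : Fin (n+1), ((X : Polynomial ℤ) ^ (q i) - 1) with hQZ
  have hPmap : PZ.map (Int.castRingHom ℂ) = ∏ k ∈ LF, Polynomial.cyclotomic k ℂ := by
    rw [hPZ, Polynomial.map_prod]
    exact Finset.prod_congr rfl fun k _ => map_cyclotomic k (Int.castRingHom ℂ)
  have hQmap : QZ.map (Int.castRingHom ℂ)
      = ∏ i : Fin (n+1), ((X : Polynomial ℂ) ^ (q i) - 1) := by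
    rw [hQZ, Polynomial.map_prod]
    refine Finset.prod_congr rfl fun i _ => ?_
    simp [Polynomial.map_sub, Polynomial.map_pow]
  have hPmonic : PZ.Monic := monic_prod_of_monic _ _ fun k _ => cyclotomic.monic k ℤ
  have hdvd : PZ ∣ QZ := by
    rw [← Polynomial.map_dvd_map (Int.castRingHom ℂ) Int.cast_injective hPmonic]
    rw [hPmap, hQmap, ← hmain]
    exact Dvd.intro_left gβ rfl
  obtain ⟨gZ, hgZ⟩ := hdvd
  refine ⟨gZ, ?_⟩
  have hP0 : (∏ k ∈ LF, Polynomial.cyclotomic k ℂ) ≠ 0 := by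
    have := hPmonic.map (Int.castRingHom ℂ)
    rw [hPmap] at this
    exact this.ne_zero
  have h2 := congrArg (Polynomial.map (Int.castRingHom ℂ)) hgZ
  rw [Polynomial.map_mul, hPmap, hQmap] at h2
  exact (mul_left_cancel₀ hP0 (by rw [← h2, ← hmain, mul_comm])).symm

end
end

section
/- Let n ≥ 2 and let G = { (λ_0,…,λ_n) ∈ ℂ^{n+1} : λ_i^{n+1} = 1 for all i and λ_0 λ_1 ⋯ λ_n = 1 } be the group of symplectic diagonal symmetries of the Fermat polynomial x_0^{n+1} + ⋯ + x_n^{n+1}. Then for integers a_0,…,a_n with 0 ≤ a_i ≤ n−1 for all i, the monomial x_0^{a_0} ⋯ x_n^{a_n} is G-invariant (that is, λ_0^{a_0} ⋯ λ_n^{a_n} = 1 for every (λ_0,…,λ_n) ∈ G) if and only if a_0 = a_1 = ⋯ = a_n. Consequently, the G-invariant monomials with all exponents at most n−1 are exactly the n monomials (x_0 x_1 ⋯ x_n)^a for 0 ≤ a ≤ n−1. -/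
open scoped BigOperators

set_option maxHeartbeats 1000000 in
lemma fermat_aux_inv (n : ℕ) (hn : 2 ≤ n) (a : Fin (n+1) → ℕ) (ha : ∀ i, a i ≤ n - 1)
    (hinv : ∀ lam : Fin (n+1) → ℂ, (∀ i, lam i ^ (n + 1) = 1) → (∏ i, lam i) = 1 →
          (∏ i, lam i ^ a i) = 1) (i j : Fin (n+1)) : a i = a j := by
  rcases eq_or_ne i j with rfl | hij
  · rfl
  obtain ⟨ζ, hζ⟩ : ∃ ζ : ℂ, IsPrimitiveRoot ζ (n+1) :=
    ⟨_, Complex.isPrimitiveRoot_exp _ (Nat.succ_ne_zero n)⟩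
  have hone : ζ ^ (n+1) = 1 := hζ.pow_eq_one
  set e : Fin (n+1) → ℕ := fun k => if k = i then 1 else if k = j then n else 0 with he
  have hsum : ∀ (m : Fin (n+1) → ℕ), ∑ k, e k * m k = m i + n * m j := by
    intro m
    have hpt : ∀ k, e k * m k = (if k = i then m i else 0) + (if k = j then n * m j else 0) := by
      intro k
      simp only [he]
      rcases eq_or_ne k i with rfl | h1
      · simp [hij]
      · rcases eq_or_ne k j with rfl | h2
        · simp [h1]
        · simp [h1, h2]
    rw [Finset.sum_congr rfl (fun k _ => hpt k), Finset.sum_add_distrib]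
    simp
  have hprodpow : ∀ (m : Fin (n+1) → ℕ), (∏ k, (ζ ^ e k) ^ m k) = ζ ^ (m i + n * m j) := by
    intro m
    have : ∀ k, (ζ ^ e k) ^ m k = ζ ^ (e k * m k) := fun k => (pow_mul ζ (e k) (m k)).symm
    rw [Finset.prod_congr rfl (fun k _ => this k), Finset.prod_pow_eq_pow_sum, hsum]
  have hlam1 : ∀ k, (ζ ^ e k) ^ (n + 1) = 1 := by
    intro k
    rw [← pow_mul, mul_comm, pow_mul, hone, one_pow]
  have hlam2 : (∏ k, ζ ^ e k) = 1 := by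
    have := hprodpow (fun _ => 1)
    simpa [add_comm 1 n, hone] using this
  have hdvd : (n + 1) ∣ a i + n * a j := by
    have h := hinv (fun k => ζ ^ e k) hlam1 hlam2
    rw [hprodpow a] at h
    exact (hζ.pow_eq_one_iff_dvd _).mp h
  obtain ⟨k, hk⟩ := hdvd
  have h2 : (a i + n * a j + a j) % (n+1) = a i % (n+1) := by
    have heq : a i + n * a j + a j = a i + a j * (n+1) := by ring
    rw [heq, Nat.add_mul_mod_self_right]
  have h3 : (a i + n * a j + a j) % (n+1) = a j % (n+1) := by
    rw [hk, Nat.mul_add_mod]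
  have h1 : a i % (n+1) = a j % (n+1) := h2.symm.trans h3
  have hi := ha i; have hj := ha j
  rw [Nat.mod_eq_of_lt (by omega), Nat.mod_eq_of_lt (by omega)] at h1
  exact h1

lemma fermat_aux_const (n : ℕ) (c : ℕ) (lam : Fin (n+1) → ℂ)
    (hprod : (∏ i, lam i) = 1) : (∏ i : Fin (n+1), lam i ^ c) = 1 := by
  rw [Finset.prod_pow, hprod, one_pow]

/-- for the Fermat polynomial `x_0^(n+1) + ⋯ + x_n^(n+1)`, a monomial
`x_0^(a_0) ⋯ x_n^(a_n)` with all `a_i ≤ n-1` is invariant under the group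
`G = {λ ∈ ℂ^(n+1) : λ_i^(n+1) = 1, λ_0 ⋯ λ_n = 1}` if and only if all exponents are
equal; consequently, the `G`-invariant monomials with exponents at most `n-1` are
exactly the `(x_0 ⋯ x_n)^a` for `0 ≤ a ≤ n-1`. -/
theorem fermat_invariant_monomials (n : ℕ) (hn : 2 ≤ n) :
    (∀ a : Fin (n+1) → ℕ, (∀ i, a i ≤ n - 1) →
      ((∀ lam : Fin (n+1) → ℂ, (∀ i, lam i ^ (n + 1) = 1) → (∏ i, lam i) = 1 →
          (∏ i, lam i ^ a i) = 1)
        ↔ ∃ c : ℕ, ∀ i, a i = c)) ∧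
    { a : Fin (n+1) → ℕ | (∀ i, a i ≤ n - 1) ∧
        (∀ lam : Fin (n+1) → ℂ, (∀ i, lam i ^ (n + 1) = 1) → (∏ i, lam i) = 1 →
          (∏ i, lam i ^ a i) = 1) }
      = { a : Fin (n+1) → ℕ | ∃ c : ℕ, c ≤ n - 1 ∧ a = fun _ => c } := by
  constructor
  · intro a ha
    constructor
    · intro hinv
      exact ⟨a 0, fun i => fermat_aux_inv n hn a ha hinv i 0⟩
    · rintro ⟨c, hc⟩ lam hroot hprod
      have : (∏ i, lam i ^ a i) = ∏ i, lam i ^ c := by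
        exact Finset.prod_congr rfl (fun i _ => by rw [hc i])
      rw [this]
      exact fermat_aux_const n c lam hprod
  · ext a
    simp only [Set.mem_setOf_eq]
    constructor
    · rintro ⟨ha, hinv⟩
      refine ⟨a 0, ha 0, funext fun i => fermat_aux_inv n hn a ha hinv i 0⟩
    · rintro ⟨c, hc, rfl⟩
      exact ⟨fun _ => hc, fun lam _ hprod => fermat_aux_const n c lam hprod⟩
end

section
/- Let F_q be a finite field of characteristic p ∉ {2, 5, 7} and let ψ ∈ F_q with ψ^4 ≠ 1. Then each of the five quartic pencil members X_{◇,ψ} for ◇ ∈ {F_4, F_2L_2, F_1L_3, L_2L_2, L_4} is a smooth hypersurface in ℙ^3: for each of the five defining quartic polynomials F, the only common zero in an algebraic closure of F_q of the four partial derivatives ∂F/∂x_0, ∂F/∂x_1, ∂F/∂x_2, ∂F/∂x_3 is the origin (0,0,0,0). -/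
open MvPolynomial Polynomial
open scoped BigOperators

noncomputable section

/-- The five quartic pencils `F_4, F_2L_2, F_1L_3, L_2L_2, L_4` of K3 surfaces in
`ℙ^3`, with parameter `ψ`. -/
def quarticFam (F : Type*) [CommRing F] (ψ : F) : Fin 5 → MvPolynomial (Fin 4) F :=
  fun d =>
    ![ (X 0 : MvPolynomial (Fin 4) F) ^ 4 + X 1 ^ 4 + X 2 ^ 4 + X 3 ^ 4,
       (X 0 : MvPolynomial (Fin 4) F) ^ 4 + X 1 ^ 4 + X 2 ^ 3 * X 3 + X 3 ^ 3 * X 2,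
       (X 0 : MvPolynomial (Fin 4) F) ^ 4 + X 1 ^ 3 * X 2 + X 2 ^ 3 * X 3 + X 3 ^ 3 * X 1,
       (X 0 : MvPolynomial (Fin 4) F) ^ 3 * X 1 + X 1 ^ 3 * X 0 + X 2 ^ 3 * X 3 + X 3 ^ 3 * X 2,
       (X 0 : MvPolynomial (Fin 4) F) ^ 3 * X 1 + X 1 ^ 3 * X 2 + X 2 ^ 3 * X 3 + X 3 ^ 3 * X 0 ] d
    - MvPolynomial.C (4 * ψ) * (X 0 * X 1 * X 2 * X 3)

theorem pderiv_ofNat' {F : Type*} [CommRing F] (i : Fin 4) :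
    pderiv i (4 : MvPolynomial (Fin 4) F) = 0 := by
  rw [← map_ofNat (C : F →+* MvPolynomial (Fin 4) F) 4, pderiv_C]

set_option maxHeartbeats 4000000 in
/-- for `p ∉ {2,5,7}` and `ψ^4 ≠ 1`, each of the five quartic pencil
members is smooth: the only common zero in an algebraic closure of the four partial
derivatives of the defining quartic is the origin. -/
theorem quartic_pencils_smooth (F : Type) [Field F] [Fintype F]
    (hp : ringChar F ≠ 2 ∧ ringChar F ≠ 5 ∧ ringChar F ≠ 7)
    (ψ : F) (hψ : ψ ^ 4 ≠ 1) :
    ∀ d : Fin 5, ∀ x : Fin 4 → AlgebraicClosure F,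
      (∀ i, MvPolynomial.eval x
        (MvPolynomial.pderiv i
          ((quarticFam F ψ d).map (algebraMap F (AlgebraicClosure F)))) = 0) →
      x = 0 := by
  obtain ⟨hp2, hp5, hp7⟩ := hp
  intro d x hx
  have hinj : Function.Injective (algebraMap F (AlgebraicClosure F)) :=
    (algebraMap F (AlgebraicClosure F)).injective
  have hchar : ∀ n : ℕ, n.Prime → ringChar F ≠ n → ((n : AlgebraicClosure F) ≠ 0) := by
    intro n hn hne h
    have hF : (n : F) = 0 := by
      apply hinj
      rw [map_natCast, map_zero, h]
    rw [ringChar.spec] at hF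
    rcases Nat.Prime.eq_one_or_self_of_dvd hn _ hF with h1 | h1
    · have h10 := (ringChar.spec F 1).mpr (h1 ▸ dvd_refl (ringChar F))
      simp at h10
    · exact hne h1
  have h2K : ((2 : AlgebraicClosure F)) ≠ 0 := hchar 2 Nat.prime_two hp2
  have h5K : ((5 : AlgebraicClosure F)) ≠ 0 := hchar 5 (by norm_num) hp5
  have h7K : ((7 : AlgebraicClosure F)) ≠ 0 := hchar 7 (by norm_num) hp7
  have h4K : ((4 : AlgebraicClosure F)) ≠ 0 := by
    have := pow_ne_zero 2 h2K
    rwa [show ((2 : AlgebraicClosure F)) ^ 2 = 4 by norm_num] at this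
  have h8K : ((8 : AlgebraicClosure F)) ≠ 0 := by
    have := pow_ne_zero 3 h2K
    rwa [show ((2 : AlgebraicClosure F)) ^ 3 = 8 by norm_num] at this
  have h28K : ((28 : AlgebraicClosure F)) ≠ 0 := by
    have := mul_ne_zero h4K h7K
    rwa [show ((4 : AlgebraicClosure F)) * 7 = 28 by norm_num] at this
  have h80K : ((80 : AlgebraicClosure F)) ≠ 0 := by
    have h16 : ((16 : AlgebraicClosure F)) ≠ 0 := by
      have := pow_ne_zero 4 h2K
      rwa [show ((2 : AlgebraicClosure F)) ^ 4 = 16 by norm_num] at this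
    have := mul_ne_zero h16 h5K
    rwa [show ((16 : AlgebraicClosure F)) * 5 = 80 by norm_num] at this
  have hφ4 : (algebraMap F (AlgebraicClosure F) ψ) ^ 4 ≠ 1 := by
    intro h
    apply hψ
    apply hinj
    rw [map_pow, h, map_one]
  fin_cases d
  -- Case F_4
  · have h0 := hx 0; have h1 := hx 1; have h2 := hx 2; have h3 := hx 3
    simp only [quarticFam, Matrix.cons_val_zero, Matrix.cons_val_one, Matrix.head_cons,
      Matrix.cons_val_two, Matrix.cons_val_three, Matrix.tail_cons, Matrix.cons_val_four,
      Fin.isValue, Matrix.cons_val', Matrix.cons_val_fin_one, Matrix.empty_val',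
      map_sub, map_add, map_mul, map_pow,
      MvPolynomial.map_X, MvPolynomial.map_C, pderiv_map, pderiv_X, pderiv_pow, pderiv_C,
      pderiv_ofNat', Derivation.leibniz, MvPolynomial.eval_add, MvPolynomial.eval_sub, MvPolynomial.eval_mul, MvPolynomial.eval_pow, MvPolynomial.eval_X, MvPolynomial.eval_C,
      Pi.single_apply, smul_eq_mul, map_ofNat, MvPolynomial.eval_ofNat] at h0 h1 h2 h3
    simp only [show ((2:Fin 4) ≠ 0) from by decide, show ((3:Fin 4) ≠ 0) from by decide,
      show ((2:Fin 4) ≠ 1) from by decide, show ((3:Fin 4) ≠ 1) from by decide,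
      show ((3:Fin 4) ≠ 2) from by decide, if_true, if_false, if_neg, ite_true, ite_false,
      mul_zero, zero_mul, add_zero, zero_add, mul_one, one_mul] at h0 h1 h2 h3
    simp at h0 h1 h2 h3
    set φ := algebraMap F (AlgebraicClosure F) ψ with hφdef
    have ha : x 0 ^ 4 = φ * (x 0 * x 1 * x 2 * x 3) := by
      have h := (mul_eq_zero.mp (show (4 : AlgebraicClosure F) *
          (x 0 ^ 4 - φ * (x 0 * x 1 * x 2 * x 3)) = 0 from by
        linear_combination (x 0) * h0)).resolve_left h4K
      exact sub_eq_zero.mp h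
    have hb : x 1 ^ 4 = φ * (x 0 * x 1 * x 2 * x 3) := by
      have h := (mul_eq_zero.mp (show (4 : AlgebraicClosure F) *
          (x 1 ^ 4 - φ * (x 0 * x 1 * x 2 * x 3)) = 0 from by
        linear_combination (x 1) * h1)).resolve_left h4K
      exact sub_eq_zero.mp h
    have hc : x 2 ^ 4 = φ * (x 0 * x 1 * x 2 * x 3) := by
      have h := (mul_eq_zero.mp (show (4 : AlgebraicClosure F) *
          (x 2 ^ 4 - φ * (x 0 * x 1 * x 2 * x 3)) = 0 from by
        linear_combination (x 2) * h2)).resolve_left h4K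
      exact sub_eq_zero.mp h
    have hd : x 3 ^ 4 = φ * (x 0 * x 1 * x 2 * x 3) := by
      have h := (mul_eq_zero.mp (show (4 : AlgebraicClosure F) *
          (x 3 ^ 4 - φ * (x 0 * x 1 * x 2 * x 3)) = 0 from by
        linear_combination (x 3) * h3)).resolve_left h4K
      exact sub_eq_zero.mp h
    by_cases ht : x 0 * x 1 * x 2 * x 3 = 0
    · have e0 : x 0 = 0 := by
        have h : x 0 ^ 4 = 0 := by rw [ha, ht, mul_zero]
        exact (pow_eq_zero_iff (by norm_num)).mp h
      have e1 : x 1 = 0 := by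
        have h : x 1 ^ 4 = 0 := by rw [hb, ht, mul_zero]
        exact (pow_eq_zero_iff (by norm_num)).mp h
      have e2 : x 2 = 0 := by
        have h : x 2 ^ 4 = 0 := by rw [hc, ht, mul_zero]
        exact (pow_eq_zero_iff (by norm_num)).mp h
      have e3 : x 3 = 0 := by
        have h : x 3 ^ 4 = 0 := by rw [hd, ht, mul_zero]
        exact (pow_eq_zero_iff (by norm_num)).mp h
      funext i; fin_cases i <;> simpa
    · exfalso
      have key : (1 - φ ^ 4) * (x 0 * x 1 * x 2 * x 3) ^ 4 = 0 := by
        linear_combination (x 1 ^ 4 * x 2 ^ 4 * x 3 ^ 4) * ha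
          + (φ * (x 0 * x 1 * x 2 * x 3) * x 2 ^ 4 * x 3 ^ 4) * hb
          + ((φ * (x 0 * x 1 * x 2 * x 3)) ^ 2 * x 3 ^ 4) * hc
          + ((φ * (x 0 * x 1 * x 2 * x 3)) ^ 3) * hd
      rcases mul_eq_zero.mp key with h | h
      · exact hφ4 (by linear_combination -h)
      · exact ht ((pow_eq_zero_iff (by norm_num)).mp h)
  -- Case F_2L_2
  · have h0 := hx 0; have h1 := hx 1; have h2 := hx 2; have h3 := hx 3
    simp only [quarticFam, Matrix.cons_val_zero, Matrix.cons_val_one, Matrix.head_cons,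
      Matrix.cons_val_two, Matrix.cons_val_three, Matrix.tail_cons, Matrix.cons_val_four,
      Fin.isValue, Matrix.cons_val', Matrix.cons_val_fin_one, Matrix.empty_val',
      map_sub, map_add, map_mul, map_pow,
      MvPolynomial.map_X, MvPolynomial.map_C, pderiv_map, pderiv_X, pderiv_pow, pderiv_C,
      pderiv_ofNat', Derivation.leibniz, MvPolynomial.eval_add, MvPolynomial.eval_sub, MvPolynomial.eval_mul, MvPolynomial.eval_pow, MvPolynomial.eval_X, MvPolynomial.eval_C,
      Pi.single_apply, smul_eq_mul, map_ofNat, MvPolynomial.eval_ofNat] at h0 h1 h2 h3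
    simp at h0 h1 h2 h3
    set φ := algebraMap F (AlgebraicClosure F) ψ with hφdef
    have ha : x 0 ^ 4 = φ * (x 0 * x 1 * x 2 * x 3) := by
      have h := (mul_eq_zero.mp (show (4 : AlgebraicClosure F) *
          (x 0 ^ 4 - φ * (x 0 * x 1 * x 2 * x 3)) = 0 from by
        linear_combination (x 0) * h0)).resolve_left h4K
      exact sub_eq_zero.mp h
    have hb : x 1 ^ 4 = φ * (x 0 * x 1 * x 2 * x 3) := by
      have h := (mul_eq_zero.mp (show (4 : AlgebraicClosure F) *
          (x 1 ^ 4 - φ * (x 0 * x 1 * x 2 * x 3)) = 0 from by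
        linear_combination (x 1) * h1)).resolve_left h4K
      exact sub_eq_zero.mp h
    have hu : x 2 ^ 3 * x 3 = φ * (x 0 * x 1 * x 2 * x 3) := by
      have h := (mul_eq_zero.mp (show (8 : AlgebraicClosure F) *
          (x 2 ^ 3 * x 3 - φ * (x 0 * x 1 * x 2 * x 3)) = 0 from by
        linear_combination (3 * x 2) * h2 - (x 3) * h3)).resolve_left h8K
      exact sub_eq_zero.mp h
    have hv : x 2 * x 3 ^ 3 = φ * (x 0 * x 1 * x 2 * x 3) := by
      have h := (mul_eq_zero.mp (show (8 : AlgebraicClosure F) *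
          (x 2 * x 3 ^ 3 - φ * (x 0 * x 1 * x 2 * x 3)) = 0 from by
        linear_combination (3 * x 3) * h3 - (x 2) * h2)).resolve_left h8K
      exact sub_eq_zero.mp h
    by_cases ht : x 0 * x 1 * x 2 * x 3 = 0
    · have e0 : x 0 = 0 := by
        have h : x 0 ^ 4 = 0 := by rw [ha, ht, mul_zero]
        exact (pow_eq_zero_iff (by norm_num)).mp h
      have e1 : x 1 = 0 := by
        have h : x 1 ^ 4 = 0 := by rw [hb, ht, mul_zero]
        exact (pow_eq_zero_iff (by norm_num)).mp h
      have hu0 : x 2 ^ 3 * x 3 = 0 := by rw [hu, ht, mul_zero]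
      rcases mul_eq_zero.mp hu0 with h | e3
      · have e2 : x 2 = 0 := (pow_eq_zero_iff (by norm_num)).mp h
        have e3 : x 3 = 0 := by
          have h33 : x 3 ^ 3 = 0 := by
            linear_combination h2 - (3 * x 3 * x 2) * e2 + (4 * φ * x 3 * x 1) * e0
          exact (pow_eq_zero_iff (by norm_num)).mp h33
        funext i; fin_cases i <;> simpa
      · have e2 : x 2 = 0 := by
          have h23 : x 2 ^ 3 = 0 := by
            linear_combination h3 - (3 * x 2 * x 3) * e3 + (4 * φ * x 1 * x 2) * e0
          exact (pow_eq_zero_iff (by norm_num)).mp h23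
        funext i; fin_cases i <;> simpa
    · exfalso
      have key : (1 - φ ^ 4) * (x 0 * x 1 * x 2 * x 3) ^ 4 = 0 := by
        linear_combination (x 1 ^ 4 * (x 2 ^ 3 * x 3) * (x 2 * x 3 ^ 3)) * ha
          + (φ * (x 0 * x 1 * x 2 * x 3) * (x 2 ^ 3 * x 3) * (x 2 * x 3 ^ 3)) * hb
          + ((φ * (x 0 * x 1 * x 2 * x 3)) ^ 2 * (x 2 * x 3 ^ 3)) * hu
          + ((φ * (x 0 * x 1 * x 2 * x 3)) ^ 3) * hv
      rcases mul_eq_zero.mp key with h | h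
      · exact hφ4 (by linear_combination -h)
      · exact ht ((pow_eq_zero_iff (by norm_num)).mp h)
  -- Case F_1L_3
  · have h0 := hx 0; have h1 := hx 1; have h2 := hx 2; have h3 := hx 3
    simp only [quarticFam, Matrix.cons_val_zero, Matrix.cons_val_one, Matrix.head_cons,
      Matrix.cons_val_two, Matrix.cons_val_three, Matrix.tail_cons, Matrix.cons_val_four,
      Fin.isValue, Matrix.cons_val', Matrix.cons_val_fin_one, Matrix.empty_val',
      map_sub, map_add, map_mul, map_pow,
      MvPolynomial.map_X, MvPolynomial.map_C, pderiv_map, pderiv_X, pderiv_pow, pderiv_C,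
      pderiv_ofNat', Derivation.leibniz, MvPolynomial.eval_add, MvPolynomial.eval_sub, MvPolynomial.eval_mul, MvPolynomial.eval_pow, MvPolynomial.eval_X, MvPolynomial.eval_C,
      Pi.single_apply, smul_eq_mul, map_ofNat, MvPolynomial.eval_ofNat] at h0 h1 h2 h3
    simp at h0 h1 h2 h3
    set φ := algebraMap F (AlgebraicClosure F) ψ with hφdef
    have ha : x 0 ^ 4 = φ * (x 0 * x 1 * x 2 * x 3) := by
      have h := (mul_eq_zero.mp (show (4 : AlgebraicClosure F) *
          (x 0 ^ 4 - φ * (x 0 * x 1 * x 2 * x 3)) = 0 from by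
        linear_combination (x 0) * h0)).resolve_left h4K
      exact sub_eq_zero.mp h
    have hu : x 1 ^ 3 * x 2 = φ * (x 0 * x 1 * x 2 * x 3) := by
      have h := (mul_eq_zero.mp (show (28 : AlgebraicClosure F) *
          (x 1 ^ 3 * x 2 - φ * (x 0 * x 1 * x 2 * x 3)) = 0 from by
        linear_combination (9 * x 1) * h1 + (x 2) * h2 - (3 * x 3) * h3)).resolve_left h28K
      exact sub_eq_zero.mp h
    have hv : x 2 ^ 3 * x 3 = φ * (x 0 * x 1 * x 2 * x 3) := by
      have h := (mul_eq_zero.mp (show (28 : AlgebraicClosure F) *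
          (x 2 ^ 3 * x 3 - φ * (x 0 * x 1 * x 2 * x 3)) = 0 from by
        linear_combination (9 * x 2) * h2 + (x 3) * h3 - (3 * x 1) * h1)).resolve_left h28K
      exact sub_eq_zero.mp h
    have hw : x 3 ^ 3 * x 1 = φ * (x 0 * x 1 * x 2 * x 3) := by
      have h := (mul_eq_zero.mp (show (28 : AlgebraicClosure F) *
          (x 3 ^ 3 * x 1 - φ * (x 0 * x 1 * x 2 * x 3)) = 0 from by
        linear_combination (9 * x 3) * h3 + (x 1) * h1 - (3 * x 2) * h2)).resolve_left h28K
      exact sub_eq_zero.mp h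
    by_cases ht : x 0 * x 1 * x 2 * x 3 = 0
    · have e0 : x 0 = 0 := by
        have h : x 0 ^ 4 = 0 := by rw [ha, ht, mul_zero]
        exact (pow_eq_zero_iff (by norm_num)).mp h
      have hu0 : x 1 ^ 3 * x 2 = 0 := by rw [hu, ht, mul_zero]
      rcases mul_eq_zero.mp hu0 with h | e2
      · have e1 : x 1 = 0 := (pow_eq_zero_iff (by norm_num)).mp h
        have e3 : x 3 = 0 := by
          have h33 : x 3 ^ 3 = 0 := by
            linear_combination h1 - (3 * x 2 * x 1) * e1 + (4 * φ * x 3 * x 2) * e0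
          exact (pow_eq_zero_iff (by norm_num)).mp h33
        have e2 : x 2 = 0 := by
          have h23 : x 2 ^ 3 = 0 := by
            linear_combination h3 - (3 * x 1 * x 3) * e3 + (4 * φ * x 1 * x 2) * e0
          exact (pow_eq_zero_iff (by norm_num)).mp h23
        funext i; fin_cases i <;> simpa
      · have e3 : x 3 = 0 := by
          have h33 : x 3 ^ 3 = 0 := by
            linear_combination h1 - (3 * x 1 ^ 2) * e2 + (4 * φ * x 3 * x 2) * e0
          exact (pow_eq_zero_iff (by norm_num)).mp h33
        have e1 : x 1 = 0 := by
          have h13 : x 1 ^ 3 = 0 := by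
            linear_combination h2 - (3 * x 3 * x 2) * e2 + (4 * φ * x 3 * x 1) * e0
          exact (pow_eq_zero_iff (by norm_num)).mp h13
        funext i; fin_cases i <;> simpa
    · exfalso
      have key : (1 - φ ^ 4) * (x 0 * x 1 * x 2 * x 3) ^ 4 = 0 := by
        linear_combination ((x 1 ^ 3 * x 2) * (x 2 ^ 3 * x 3) * (x 3 ^ 3 * x 1)) * ha
          + (φ * (x 0 * x 1 * x 2 * x 3) * (x 2 ^ 3 * x 3) * (x 3 ^ 3 * x 1)) * hu
          + ((φ * (x 0 * x 1 * x 2 * x 3)) ^ 2 * (x 3 ^ 3 * x 1)) * hv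
          + ((φ * (x 0 * x 1 * x 2 * x 3)) ^ 3) * hw
      rcases mul_eq_zero.mp key with h | h
      · exact hφ4 (by linear_combination -h)
      · exact ht ((pow_eq_zero_iff (by norm_num)).mp h)
  -- Case L_2L_2
  · have h0 := hx 0; have h1 := hx 1; have h2 := hx 2; have h3 := hx 3
    simp only [quarticFam, Matrix.cons_val_zero, Matrix.cons_val_one, Matrix.head_cons,
      Matrix.cons_val_two, Matrix.cons_val_three, Matrix.tail_cons, Matrix.cons_val_four,
      Fin.isValue, Matrix.cons_val', Matrix.cons_val_fin_one, Matrix.empty_val',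
      map_sub, map_add, map_mul, map_pow,
      MvPolynomial.map_X, MvPolynomial.map_C, pderiv_map, pderiv_X, pderiv_pow, pderiv_C,
      pderiv_ofNat', Derivation.leibniz, MvPolynomial.eval_add, MvPolynomial.eval_sub, MvPolynomial.eval_mul, MvPolynomial.eval_pow, MvPolynomial.eval_X, MvPolynomial.eval_C,
      Pi.single_apply, smul_eq_mul, map_ofNat, MvPolynomial.eval_ofNat] at h0 h1 h2 h3
    simp at h0 h1 h2 h3
    set φ := algebraMap F (AlgebraicClosure F) ψ with hφdef
    have hu1 : x 0 ^ 3 * x 1 = φ * (x 0 * x 1 * x 2 * x 3) := by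
      have h := (mul_eq_zero.mp (show (8 : AlgebraicClosure F) *
          (x 0 ^ 3 * x 1 - φ * (x 0 * x 1 * x 2 * x 3)) = 0 from by
        linear_combination (3 * x 0) * h0 - (x 1) * h1)).resolve_left h8K
      exact sub_eq_zero.mp h
    have hu2 : x 0 * x 1 ^ 3 = φ * (x 0 * x 1 * x 2 * x 3) := by
      have h := (mul_eq_zero.mp (show (8 : AlgebraicClosure F) *
          (x 0 * x 1 ^ 3 - φ * (x 0 * x 1 * x 2 * x 3)) = 0 from by
        linear_combination (3 * x 1) * h1 - (x 0) * h0)).resolve_left h8K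
      exact sub_eq_zero.mp h
    have hv1 : x 2 ^ 3 * x 3 = φ * (x 0 * x 1 * x 2 * x 3) := by
      have h := (mul_eq_zero.mp (show (8 : AlgebraicClosure F) *
          (x 2 ^ 3 * x 3 - φ * (x 0 * x 1 * x 2 * x 3)) = 0 from by
        linear_combination (3 * x 2) * h2 - (x 3) * h3)).resolve_left h8K
      exact sub_eq_zero.mp h
    have hv2 : x 2 * x 3 ^ 3 = φ * (x 0 * x 1 * x 2 * x 3) := by
      have h := (mul_eq_zero.mp (show (8 : AlgebraicClosure F) *
          (x 2 * x 3 ^ 3 - φ * (x 0 * x 1 * x 2 * x 3)) = 0 from by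
        linear_combination (3 * x 3) * h3 - (x 2) * h2)).resolve_left h8K
      exact sub_eq_zero.mp h
    by_cases ht : x 0 * x 1 * x 2 * x 3 = 0
    · have hu0 : x 0 ^ 3 * x 1 = 0 := by rw [hu1, ht, mul_zero]
      have hv0 : x 2 ^ 3 * x 3 = 0 := by rw [hv1, ht, mul_zero]
      have hab : x 0 = 0 ∨ x 1 = 0 := by
        rcases mul_eq_zero.mp hu0 with h | h
        · exact Or.inl ((pow_eq_zero_iff (by norm_num)).mp h)
        · exact Or.inr h
      have hcd : x 2 = 0 ∨ x 3 = 0 := by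
        rcases mul_eq_zero.mp hv0 with h | h
        · exact Or.inl ((pow_eq_zero_iff (by norm_num)).mp h)
        · exact Or.inr h
      rcases hab with e0 | e1 <;> rcases hcd with e2 | e3
      · -- x0 = 0, x2 = 0
        have e1 : x 1 = 0 := by
          have h13 : x 1 ^ 3 = 0 := by
            linear_combination h0 - (3 * x 0 * x 1) * e0 + (4 * φ * x 3 * x 1) * e2
          exact (pow_eq_zero_iff (by norm_num)).mp h13
        have e3 : x 3 = 0 := by
          have h33 : x 3 ^ 3 = 0 := by
            linear_combination h2 - (3 * x 2 * x 3) * e2 + (4 * φ * x 3 * x 1) * e0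
          exact (pow_eq_zero_iff (by norm_num)).mp h33
        funext i; fin_cases i <;> simpa
      · -- x0 = 0, x3 = 0
        have e1 : x 1 = 0 := by
          have h13 : x 1 ^ 3 = 0 := by
            linear_combination h0 - (3 * x 0 * x 1) * e0 + (4 * φ * x 2 * x 1) * e3
          exact (pow_eq_zero_iff (by norm_num)).mp h13
        have e2 : x 2 = 0 := by
          have h23 : x 2 ^ 3 = 0 := by
            linear_combination h3 - (3 * x 3 * x 2) * e3 + (4 * φ * x 1 * x 2) * e0
          exact (pow_eq_zero_iff (by norm_num)).mp h23
        funext i; fin_cases i <;> simpa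
      · -- x1 = 0, x2 = 0
        have e0 : x 0 = 0 := by
          have h03 : x 0 ^ 3 = 0 := by
            linear_combination h1 - (3 * x 1 * x 0) * e1 + (4 * φ * x 3 * x 0) * e2
          exact (pow_eq_zero_iff (by norm_num)).mp h03
        have e3 : x 3 = 0 := by
          have h33 : x 3 ^ 3 = 0 := by
            linear_combination h2 - (3 * x 2 * x 3) * e2 + (4 * φ * x 3 * x 0) * e1
          exact (pow_eq_zero_iff (by norm_num)).mp h33
        funext i; fin_cases i <;> simpa
      · -- x1 = 0, x3 = 0
        have e0 : x 0 = 0 := by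
          have h03 : x 0 ^ 3 = 0 := by
            linear_combination h1 - (3 * x 1 * x 0) * e1 + (4 * φ * x 2 * x 0) * e3
          exact (pow_eq_zero_iff (by norm_num)).mp h03
        have e2 : x 2 = 0 := by
          have h23 : x 2 ^ 3 = 0 := by
            linear_combination h3 - (3 * x 3 * x 2) * e3 + (4 * φ * x 0 * x 2) * e1
          exact (pow_eq_zero_iff (by norm_num)).mp h23
        funext i; fin_cases i <;> simpa
    · exfalso
      have key : (1 - φ ^ 4) * (x 0 * x 1 * x 2 * x 3) ^ 4 = 0 := by
        linear_combination ((x 0 * x 1 ^ 3) * (x 2 ^ 3 * x 3) * (x 2 * x 3 ^ 3)) * hu1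
          + (φ * (x 0 * x 1 * x 2 * x 3) * (x 2 ^ 3 * x 3) * (x 2 * x 3 ^ 3)) * hu2
          + ((φ * (x 0 * x 1 * x 2 * x 3)) ^ 2 * (x 2 * x 3 ^ 3)) * hv1
          + ((φ * (x 0 * x 1 * x 2 * x 3)) ^ 3) * hv2
      rcases mul_eq_zero.mp key with h | h
      · exact hφ4 (by linear_combination -h)
      · exact ht ((pow_eq_zero_iff (by norm_num)).mp h)
  -- Case L_4
  · have h0 := hx 0; have h1 := hx 1; have h2 := hx 2; have h3 := hx 3
    simp only [quarticFam, Matrix.cons_val_zero, Matrix.cons_val_one, Matrix.head_cons,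
      Matrix.cons_val_two, Matrix.cons_val_three, Matrix.tail_cons, Matrix.cons_val_four,
      Fin.isValue, Matrix.cons_val', Matrix.cons_val_fin_one, Matrix.empty_val',
      map_sub, map_add, map_mul, map_pow,
      MvPolynomial.map_X, MvPolynomial.map_C, pderiv_map, pderiv_X, pderiv_pow, pderiv_C,
      pderiv_ofNat', Derivation.leibniz, MvPolynomial.eval_add, MvPolynomial.eval_sub, MvPolynomial.eval_mul, MvPolynomial.eval_pow, MvPolynomial.eval_X, MvPolynomial.eval_C,
      Pi.single_apply, smul_eq_mul, map_ofNat, MvPolynomial.eval_ofNat] at h0 h1 h2 h3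
    simp at h0 h1 h2 h3
    set φ := algebraMap F (AlgebraicClosure F) ψ with hφdef
    have hu : x 0 ^ 3 * x 1 = φ * (x 0 * x 1 * x 2 * x 3) := by
      have h := (mul_eq_zero.mp (show (80 : AlgebraicClosure F) *
          (x 0 ^ 3 * x 1 - φ * (x 0 * x 1 * x 2 * x 3)) = 0 from by
        linear_combination (27 * x 0) * h0 - (x 1) * h1 + (3 * x 2) * h2
          - (9 * x 3) * h3)).resolve_left h80K
      exact sub_eq_zero.mp h
    have hv : x 1 ^ 3 * x 2 = φ * (x 0 * x 1 * x 2 * x 3) := by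
      have h := (mul_eq_zero.mp (show (80 : AlgebraicClosure F) *
          (x 1 ^ 3 * x 2 - φ * (x 0 * x 1 * x 2 * x 3)) = 0 from by
        linear_combination (27 * x 1) * h1 - (x 2) * h2 + (3 * x 3) * h3
          - (9 * x 0) * h0)).resolve_left h80K
      exact sub_eq_zero.mp h
    have hw : x 2 ^ 3 * x 3 = φ * (x 0 * x 1 * x 2 * x 3) := by
      have h := (mul_eq_zero.mp (show (80 : AlgebraicClosure F) *
          (x 2 ^ 3 * x 3 - φ * (x 0 * x 1 * x 2 * x 3)) = 0 from by
        linear_combination (27 * x 2) * h2 - (x 3) * h3 + (3 * x 0) * h0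
          - (9 * x 1) * h1)).resolve_left h80K
      exact sub_eq_zero.mp h
    have hz : x 3 ^ 3 * x 0 = φ * (x 0 * x 1 * x 2 * x 3) := by
      have h := (mul_eq_zero.mp (show (80 : AlgebraicClosure F) *
          (x 3 ^ 3 * x 0 - φ * (x 0 * x 1 * x 2 * x 3)) = 0 from by
        linear_combination (27 * x 3) * h3 - (x 0) * h0 + (3 * x 1) * h1
          - (9 * x 2) * h2)).resolve_left h80K
      exact sub_eq_zero.mp h
    by_cases ht : x 0 * x 1 * x 2 * x 3 = 0
    · have hu0 : x 0 ^ 3 * x 1 = 0 := by rw [hu, ht, mul_zero]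
      rcases mul_eq_zero.mp hu0 with h | e1
      · have e0 : x 0 = 0 := (pow_eq_zero_iff (by norm_num)).mp h
        have e2 : x 2 = 0 := by
          have h23 : x 2 ^ 3 = 0 := by
            linear_combination h3 + (4 * φ * x 1 * x 2 - 3 * x 3 ^ 2) * e0
          exact (pow_eq_zero_iff (by norm_num)).mp h23
        have e1 : x 1 = 0 := by
          have h13 : x 1 ^ 3 = 0 := by
            linear_combination h2 - (3 * x 2 * x 3) * e2 + (4 * φ * x 3 * x 1) * e0
          exact (pow_eq_zero_iff (by norm_num)).mp h13
        have e3 : x 3 = 0 := by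
          have h33 : x 3 ^ 3 = 0 := by
            linear_combination h0 - (3 * x 0 * x 1) * e0 + (4 * φ * x 3 * x 1) * e2
          exact (pow_eq_zero_iff (by norm_num)).mp h33
        funext i; fin_cases i <;> simpa
      · have e3 : x 3 = 0 := by
          have h33 : x 3 ^ 3 = 0 := by
            linear_combination h0 + (4 * φ * x 3 * x 2 - 3 * x 0 ^ 2) * e1
          exact (pow_eq_zero_iff (by norm_num)).mp h33
        have e2 : x 2 = 0 := by
          have h23 : x 2 ^ 3 = 0 := by
            linear_combination h3 - (3 * x 0 * x 3) * e3 + (4 * φ * x 0 * x 2) * e1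
          exact (pow_eq_zero_iff (by norm_num)).mp h23
        have e0 : x 0 = 0 := by
          have h03 : x 0 ^ 3 = 0 := by
            linear_combination h1 - (3 * x 1 * x 2) * e1 + (4 * φ * x 3 * x 0) * e2
          exact (pow_eq_zero_iff (by norm_num)).mp h03
        funext i; fin_cases i <;> simpa
    · exfalso
      have key : (1 - φ ^ 4) * (x 0 * x 1 * x 2 * x 3) ^ 4 = 0 := by
        linear_combination ((x 1 ^ 3 * x 2) * (x 2 ^ 3 * x 3) * (x 3 ^ 3 * x 0)) * hu
          + (φ * (x 0 * x 1 * x 2 * x 3) * (x 2 ^ 3 * x 3) * (x 3 ^ 3 * x 0)) * hv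
          + ((φ * (x 0 * x 1 * x 2 * x 3)) ^ 2 * (x 3 ^ 3 * x 0)) * hw
          + ((φ * (x 0 * x 1 * x 2 * x 3)) ^ 3) * hz
      rcases mul_eq_zero.mp key with h | h
      · exact hφ4 (by linear_combination -h)
      · exact ht ((pow_eq_zero_iff (by norm_num)).mp h)

end
end
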